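/- arXiv:2603.07359 — 7 statements merged into one kernel-verified Lean document; each statement's English description precedes it below -/
import Mathlib

section
/- For every integer m ≥ 1 and every real p ∈ (0,∞), there exists a complex-linear map Φ from the space of m×m complex matrices to the space of m²×m² complex matrices such that Tr((Φ(A)*Φ(A))^{p/2}) = (Tr(A*A))^{p/2} for all m×m complex matrices A, and moreover the operator norm of Φ(A) equals (Tr(A*A))^{1/2}. In other words, S_2^m embeds isometrically into S_p^{m²} for every p ∈ (0,∞]. -/
open scoped Matrix

/-- `Tr((AᴴA)^{p/2})`, computed as the sum of the `p/2`-th powers (real powers) of the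
eigenvalues of the positive semidefinite matrix `AᴴA`; this equals `‖A‖_p^p`, the `p`-th
power of the Schatten `p`-(quasi-)norm of `A`. -/
noncomputable def schattenSum (p : ℝ) {n : ℕ} (A : Matrix (Fin n) (Fin n) ℂ) : ℝ :=
  ∑ i, (Matrix.isHermitian_conjTranspose_mul_self A).eigenvalues i ^ (p / 2)

/-- The operator norm of a matrix acting on `ℓ_2^n(ℂ)`, i.e. `‖A‖_∞`. -/
noncomputable def opNormMat {n : ℕ} (A : Matrix (Fin n) (Fin n) ℂ) : ℝ :=
  ‖Matrix.toEuclideanCLM (𝕜 := ℂ) A‖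

/-- Sum of `q`-th powers of eigenvalues of a one-spike diagonal Hermitian matrix. -/
lemma eigen_sum_diag {n : ℕ} (c : ℝ) (hc : 0 ≤ c) (z : Fin n)
    {H : Matrix (Fin n) (Fin n) ℂ} (hH : H.IsHermitian)
    (hdiag : H = Matrix.diagonal (fun i => if i = z then (c : ℂ) else 0))
    (q : ℝ) (hq : 0 < q) :
    ∑ i, hH.eigenvalues i ^ q = c ^ q := by
  subst hdiag
  set lam := hH.eigenvalues with hlam
  have hdich : ∀ j, lam j = 0 ∨ lam j = c := by
    intro j
    have hv := hH.mulVec_eigenvectorBasis j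
    have hvne : (⇑(hH.eigenvectorBasis j) : Fin n → ℂ) ≠ 0 := by
      intro h0
      exact hH.eigenvectorBasis.orthonormal.ne_zero j (by ext i; exact congrFun h0 i)
    obtain ⟨i, hi⟩ := Function.ne_iff.mp hvne
    have hi' : (⇑(hH.eigenvectorBasis j) : Fin n → ℂ) i ≠ 0 := hi
    have hentry : (if i = z then (c:ℂ) else 0) * (hH.eigenvectorBasis j) i
        = ((lam j : ℝ) : ℂ) * (hH.eigenvectorBasis j) i := by
      have h := congrFun hv i
      simpa [Matrix.mulVec, dotProduct, Matrix.diagonal, Finset.sum_ite_eq,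
        Complex.real_smul, ite_mul, zero_mul, hlam] using h
    have hval : ((if i = z then (c:ℂ) else 0)) = ((lam j : ℝ) : ℂ) :=
      mul_right_cancel₀ hi' hentry
    by_cases hiz : i = z
    · right
      rw [if_pos hiz] at hval
      exact_mod_cast hval.symm
    · left
      rw [if_neg hiz] at hval
      exact_mod_cast hval.symm
  have htr : ∑ j, lam j = c := by
    have h3 : ((∑ j, lam j : ℝ) : ℂ) = (c : ℂ) := by
      have h2 := hH.trace_eq_sum_eigenvalues
      rw [Complex.ofReal_sum, hlam]
      simpa [Matrix.trace_diagonal, Finset.sum_ite_eq] using h2.symm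
    exact_mod_cast h3
  rcases eq_or_lt_of_le hc with hc0 | hcpos
  · have : ∀ j, lam j = 0 := by
      intro j; rcases hdich j with h | h
      · exact h
      · rw [h, ← hc0]
    simp [this, Real.zero_rpow hq.ne', ← hc0]
  · set S := Finset.univ.filter (fun j => lam j = c) with hS
    have hcard : (S.card : ℝ) * c = c := by
      calc (S.card : ℝ) * c = ∑ j ∈ S, c := by rw [Finset.sum_const, nsmul_eq_mul]
        _ = ∑ j ∈ S, lam j + ∑ j ∈ Finset.univ.filter (fun j => ¬ lam j = c), lam j := by
            rw [Finset.sum_congr rfl (fun j hj => ((Finset.mem_filter.mp hj).2).symm)]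
            have : ∑ j ∈ Finset.univ.filter (fun j => ¬ lam j = c), lam j = 0 := by
              apply Finset.sum_eq_zero
              intro j hj
              rcases hdich j with h | h
              · exact h
              · exact absurd h (Finset.mem_filter.mp hj).2
            rw [this, add_zero]
        _ = ∑ j, lam j := Finset.sum_filter_add_sum_filter_not _ _ _
        _ = c := htr
    have hcard1 : S.card = 1 := by
      have : (S.card : ℝ) = 1 :=
        mul_right_cancel₀ hcpos.ne' (hcard.trans (one_mul c).symm)
      have h1' : ((S.card : ℕ) : ℝ) = ((1 : ℕ) : ℝ) := by rw [this]; norm_num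
      exact Nat.cast_injective h1'
    calc ∑ j, lam j ^ q
        = ∑ j ∈ S, lam j ^ q + ∑ j ∈ Finset.univ.filter (fun j => ¬ lam j = c), lam j ^ q :=
          (Finset.sum_filter_add_sum_filter_not _ _ _).symm
      _ = ∑ j ∈ S, c ^ q + 0 := by
          congr 1
          · exact Finset.sum_congr rfl (fun j hj => by rw [(Finset.mem_filter.mp hj).2])
          · apply Finset.sum_eq_zero
            intro j hj
            rcases hdich j with h | h
            · rw [h]; exact Real.zero_rpow hq.ne'
            · exact absurd h (Finset.mem_filter.mp hj).2
      _ = c ^ q := by rw [Finset.sum_const, hcard1, one_nsmul, add_zero]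

lemma opNorm_col {n : ℕ} (z : Fin n) (v : Fin n → ℂ) :
    opNormMat (Matrix.of fun i j => if j = z then v i else 0)
      = Real.sqrt (∑ i, ‖v i‖ ^ 2) := by
  set M : Matrix (Fin n) (Fin n) ℂ := Matrix.of fun i j => if j = z then v i else 0 with hM
  set T := Matrix.toEuclideanCLM (𝕜 := ℂ) M with hT
  set c : ℝ := ∑ i, ‖v i‖ ^ 2 with hc
  have hc0 : 0 ≤ c := Finset.sum_nonneg fun i _ => sq_nonneg _
  have hTx : ∀ x : EuclideanSpace ℂ (Fin n), ∀ i, (T x) i = v i * x z := by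
    intro x i
    have h := congrFun (Matrix.ofLp_toEuclideanCLM (n := Fin n) (𝕜 := ℂ) M x) i
    rw [h]
    simp [Matrix.mulVec, dotProduct, hM, ite_mul, zero_mul,
      Finset.sum_ite_eq']
  have hnormTx : ∀ x : EuclideanSpace ℂ (Fin n), ‖T x‖ = Real.sqrt c * ‖x z‖ := by
    intro x
    rw [EuclideanSpace.norm_eq]
    have : ∀ i, ‖(T x) i‖ ^ 2 = ‖v i‖ ^ 2 * ‖x z‖ ^ 2 := by
      intro i; rw [hTx x i, norm_mul, mul_pow]
    rw [Finset.sum_congr rfl fun i _ => this i, ← Finset.sum_mul,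
      Real.sqrt_mul (by positivity), Real.sqrt_sq (norm_nonneg _)]
  have hxz : ∀ x : EuclideanSpace ℂ (Fin n), ‖x z‖ ≤ ‖x‖ := by
    intro x
    rw [EuclideanSpace.norm_eq]
    refine (Real.le_sqrt (norm_nonneg _) (by positivity)).mpr ?_
    exact Finset.single_le_sum (f := fun i => ‖x i‖ ^ 2) (fun i _ => sq_nonneg _)
      (Finset.mem_univ z)
  unfold opNormMat
  rw [← hT]
  apply le_antisymm
  · apply ContinuousLinearMap.opNorm_le_bound _ (Real.sqrt_nonneg c)
    intro x
    rw [hnormTx x]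
    exact mul_le_mul_of_nonneg_left (hxz x) (Real.sqrt_nonneg c)
  · have h1 : ‖T (EuclideanSpace.single z (1:ℂ))‖ = Real.sqrt c := by
      rw [hnormTx]
      simp [EuclideanSpace.single_apply]
    calc Real.sqrt c = ‖T (EuclideanSpace.single z (1:ℂ))‖ := h1.symm
      _ ≤ ‖T‖ * ‖EuclideanSpace.single z (1:ℂ)‖ := T.le_opNorm _
      _ = ‖T‖ := by
          have h2 : ‖EuclideanSpace.single z (1:ℂ)‖ = 1 := by
            rw [EuclideanSpace.norm_single]; norm_num
          rw [h2, mul_one]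

set_option maxRecDepth 8000 in
/-- For every `m ≥ 1` and `0 < p < ∞` there is a complex-linear map `Φ` from `m×m`
matrices to `m²×m²` matrices with `Tr((Φ(A)*Φ(A))^{p/2}) = (Tr(A*A))^{p/2}` for all `A`,
and such that the operator norm of `Φ(A)` is `(Tr(A*A))^{1/2}`.  In other words, `S_2^m`
embeds isometrically into `S_p^{m²}` for every `p ∈ (0,∞]`. -/
theorem S2_embeds_into_Sp_m_squared (m : ℕ) (hm : 1 ≤ m) (p : ℝ) (hp : 0 < p) :
    ∃ Φ : Matrix (Fin m) (Fin m) ℂ →ₗ[ℂ] Matrix (Fin (m ^ 2)) (Fin (m ^ 2)) ℂ,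
      ∀ A : Matrix (Fin m) (Fin m) ℂ,
        schattenSum p (Φ A) = ((Aᴴ * A).trace.re) ^ (p / 2) ∧
        opNormMat (Φ A) = ((Aᴴ * A).trace.re) ^ ((1 : ℝ) / 2) := by
  have hm2 : 0 < m ^ 2 := pow_pos hm 2
  set z : Fin (m ^ 2) := ⟨0, hm2⟩ with hz
  set e : Fin (m ^ 2) ≃ Fin m × Fin m :=
    (finCongr (sq m)).trans finProdFinEquiv.symm with he
  refine ⟨{ toFun := fun A => Matrix.of fun i j => if j = z then A (e i).1 (e i).2 else 0,
            map_add' := by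
              intro A B; ext i j
              by_cases h : j = z <;> simp [h]
            map_smul' := by
              intro r A; ext i j
              by_cases h : j = z <;> simp [h] }, ?_⟩
  intro A
  set v : Fin (m ^ 2) → ℂ := fun i => A (e i).1 (e i).2 with hv
  set c : ℝ := (Aᴴ * A).trace.re with hc
  have hre : ∀ a : ℂ, (star a * a).re = ‖a‖ ^ 2 := by
    intro a
    rw [Complex.star_def, ← Complex.normSq_eq_conj_mul_self, Complex.ofReal_re,
      Complex.sq_norm]
  have hcv : c = ∑ i, ‖v i‖ ^ 2 := by
    have h1 : c = ∑ a, ∑ b, ‖A a b‖ ^ 2 := by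
      rw [hc]
      rw [Matrix.trace]
      simp only [Matrix.diag_apply, Matrix.mul_apply, Matrix.conjTranspose_apply,
        Complex.re_sum]
      rw [Finset.sum_comm]
      exact Finset.sum_congr rfl fun a _ => Finset.sum_congr rfl fun b _ => by
        rw [hre]
    rw [h1]
    exact ((Fintype.sum_prod_type (f := fun q : Fin m × Fin m => ‖A q.1 q.2‖ ^ 2)).symm).trans
      (Equiv.sum_comp e fun q : Fin m × Fin m => ‖A q.1 q.2‖ ^ 2).symm
  have hc0 : 0 ≤ c := by
    rw [hcv]; exact Finset.sum_nonneg fun i _ => sq_nonneg _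
  have hsumv : ∑ i, (starRingEnd ℂ) (v i) * v i = (c : ℂ) := by
    have : ∀ i : Fin (m ^ 2), (starRingEnd ℂ) (v i) * v i = ((‖v i‖ ^ 2 : ℝ) : ℂ) := by
      intro i
      rw [mul_comm, Complex.mul_conj]
      norm_cast
      simp [Complex.sq_norm]
    rw [Finset.sum_congr rfl fun i _ => this i, hcv]
    push_cast
    rfl
  set M : Matrix (Fin (m ^ 2)) (Fin (m ^ 2)) ℂ :=
    Matrix.of fun i j => if j = z then v i else 0 with hMdef
  have hdiag : Mᴴ * M = Matrix.diagonal (fun i => if i = z then (c : ℂ) else 0) := by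
    ext j k
    rw [Matrix.mul_apply]
    have hterm : ∀ i, Mᴴ j i * M i k
        = if j = z ∧ k = z then (starRingEnd ℂ) (v i) * v i else 0 := by
      intro i
      by_cases hj : j = z <;> by_cases hk : k = z <;>
        simp [hMdef, Matrix.conjTranspose_apply, hj, hk]
    rw [Finset.sum_congr rfl fun i _ => hterm i]
    by_cases hj : j = z
    · by_cases hk : k = z
      · subst hj; subst hk
        rw [Matrix.diagonal_apply_eq]
        simpa using hsumv
      · have hjk : j ≠ k := fun h => hk (h ▸ hj)
        rw [Matrix.diagonal_apply_ne _ hjk]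
        simp [hk]
    · by_cases hjk : j = k
      · subst hjk
        rw [Matrix.diagonal_apply_eq]
        simp [hj]
      · rw [Matrix.diagonal_apply_ne _ hjk]
        simp [hj]
  constructor
  · have := eigen_sum_diag c hc0 z (Matrix.isHermitian_conjTranspose_mul_self M) hdiag
      (p / 2) (by positivity)
    simpa [schattenSum] using this
  · have := opNorm_col z v
    calc opNormMat M = Real.sqrt (∑ i, ‖v i‖ ^ 2) := this
      _ = Real.sqrt c := by rw [← hcv]
      _ = c ^ ((1 : ℝ) / 2) := Real.sqrt_eq_rpow c
end

section
/- Let m ≥ 1 be an integer and let p ≥ 2 be an even integer. Then there exist an integer n with m ≤ n ≤ C(m+p−1, m−1) (a binomial coefficient) and a linear map T : ℝ^m → ℝ^n such that Σ_{j=1}^n |(Tx)_j|^p = (Σ_{i=1}^m x_i²)^{p/2} for all x ∈ ℝ^m; that is, ℓ_2^m(ℝ) embeds isometrically into ℓ_p^n(ℝ). -/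
set_option maxHeartbeats 1600000

open Finset

/-- Conic Carathéodory: a nonnegative combination can be rewritten as a nonnegative
combination over a subset on which the vectors are linearly independent. -/
lemma cone_caratheodory {ι V : Type*} [DecidableEq ι] [AddCommGroup V] [Module ℝ V]
    (n : ℕ) (t : Finset ι) (hcard : t.card ≤ n) (w : ι → ℝ) (F : ι → V)
    (hw : ∀ j ∈ t, 0 ≤ w j) :
    ∃ (t' : Finset ι) (w' : ι → ℝ), t' ⊆ t ∧ (∀ j ∈ t', 0 ≤ w' j) ∧
      (∑ j ∈ t', w' j • F j = ∑ j ∈ t, w j • F j) ∧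
      LinearIndependent ℝ (fun j : t' => F (j : ι)) := by
  induction n generalizing t w with
  | zero =>
    have ht : t = ∅ := Finset.card_eq_zero.mp (Nat.le_zero.mp hcard)
    subst ht
    refine ⟨∅, w, Finset.Subset.refl _, by simp, rfl, ?_⟩
    exact linearIndependent_empty_type
  | succ n ih =>
    by_cases hli : LinearIndependent ℝ (fun j : t => F (j : ι))
    · exact ⟨t, w, Finset.Subset.refl _, hw, rfl, hli⟩
    · obtain ⟨g, hg0, i₁, hgi₁⟩ := Fintype.not_linearIndependent_iff.mp hli
      classical
      set c : ι → ℝ := fun j => if h : j ∈ t then g ⟨j, h⟩ else 0 with hc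
      have hsumc : ∑ j ∈ t, c j • F j = 0 := by
        rw [← Finset.sum_coe_sort t (fun j => c j • F j)]
        rw [← hg0]
        refine Finset.sum_congr rfl fun j _ => ?_
        simp [hc, j.2]
      have hcne : c (i₁ : ι) ≠ 0 := by simpa [hc, i₁.2] using hgi₁
      -- replace c by d with some positive value on t
      obtain ⟨d, hsumd, j₁, hj₁t, hdj₁⟩ :
          ∃ d : ι → ℝ, (∑ j ∈ t, d j • F j = 0) ∧ ∃ j₁ ∈ t, 0 < d j₁ := by
        rcases lt_or_gt_of_ne hcne with h | h
        · exact ⟨-c, by simp [hsumc], i₁, i₁.2, by simpa using h⟩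
        · exact ⟨c, hsumc, i₁, i₁.2, h⟩
      set S := t.filter (fun j => 0 < d j) with hS
      have hSne : S.Nonempty := ⟨j₁, Finset.mem_filter.mpr ⟨hj₁t, hdj₁⟩⟩
      obtain ⟨j₀, hj₀S, hj₀min⟩ := S.exists_min_image (fun j => w j / d j) hSne
      have hj₀t : j₀ ∈ t := (Finset.mem_filter.mp hj₀S).1
      have hdj₀ : 0 < d j₀ := (Finset.mem_filter.mp hj₀S).2
      set r := w j₀ / d j₀ with hr
      have hr0 : 0 ≤ r := div_nonneg (hw _ hj₀t) hdj₀.le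
      set w'' : ι → ℝ := fun j => w j - r * d j with hw''
      have hw''nn : ∀ j ∈ t, 0 ≤ w'' j := by
        intro j hj
        by_cases hdj : 0 < d j
        · have hjS : j ∈ S := Finset.mem_filter.mpr ⟨hj, hdj⟩
          have := hj₀min j hjS
          have : r * d j ≤ w j := by
            rw [hr]
            exact (le_div_iff₀ hdj).mp this
          simpa [hw''] using sub_nonneg.mpr this
        · push_neg at hdj
          have h1 : r * d j ≤ 0 := mul_nonpos_of_nonneg_of_nonpos hr0 hdj
          have := hw _ hj
          simp only [hw'']
          linarith
      have hw''j₀ : w'' j₀ = 0 := by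
        simp only [hw'', hr]
        field_simp
        ring
      have hsum'' : ∑ j ∈ t, w'' j • F j = ∑ j ∈ t, w j • F j := by
        simp only [hw'', sub_smul, mul_smul, Finset.sum_sub_distrib]
        rw [← Finset.smul_sum, hsumd, smul_zero, sub_zero]
      have hcard' : (t.erase j₀).card ≤ n := by
        have := Finset.card_erase_of_mem hj₀t
        omega
      have herase : ∑ j ∈ t.erase j₀, w'' j • F j = ∑ j ∈ t, w'' j • F j :=
        Finset.sum_erase _ (by rw [hw''j₀, zero_smul])
      obtain ⟨t', w', ht'sub, hw'nn, hw'sum, hli'⟩ :=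
        ih (t.erase j₀) hcard' w'' (fun j hj => hw''nn j (Finset.mem_of_mem_erase hj))
      exact ⟨t', w', ht'sub.trans (Finset.erase_subset _ _), hw'nn,
        by rw [hw'sum, herase, hsum''], hli'⟩

open Finset Set

lemma pad_sum {M : Type*} [AddCommMonoid M] {c N : ℕ} (hc : c ≤ N) (f : Fin c → M) :
    (∑ i : Fin N, if h : (i : ℕ) < c then f ⟨i, h⟩ else 0) = ∑ j : Fin c, f j := by
  rw [Fin.sum_univ_eq_sum_range (fun i => if h : i < c then f ⟨i, h⟩ else 0) N]
  have h1 : (∑ i ∈ Finset.range N, if h : i < c then f ⟨i, h⟩ else 0)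
      = ∑ i ∈ Finset.range c, if h : i < c then f ⟨i, h⟩ else 0 :=
    (Finset.sum_subset (Finset.range_subset_range.mpr hc)
      fun i _ hic => dif_neg (by simpa using hic)).symm
  rw [h1, ← Fin.sum_univ_eq_sum_range (fun i => if h : i < c then f ⟨i, h⟩ else 0) c]
  exact Finset.sum_congr rfl fun j _ => by rw [dif_pos j.isLt]

lemma isCompact_convexHull_of_isCompact {V : Type*} [NormedAddCommGroup V] [NormedSpace ℝ V]
    [FiniteDimensional ℝ V] {K : Set V} (hK : IsCompact K) : IsCompact (convexHull ℝ K) := by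
  rcases K.eq_empty_or_nonempty with rfl | ⟨k₀, hk₀⟩
  · simp [convexHull_empty, isCompact_empty]
  set N := Module.finrank ℝ V + 1 with hN
  set φ : (Fin N → ℝ) × (Fin N → V) → V := fun q => ∑ i, q.1 i • q.2 i with hφ
  have hφc : Continuous φ := by
    apply continuous_finset_sum
    intro i _
    exact ((continuous_apply i).comp continuous_fst).smul
      ((continuous_apply i).comp continuous_snd)
  set S : Set ((Fin N → ℝ) × (Fin N → V)) :=
    (stdSimplex ℝ (Fin N)) ×ˢ (Set.univ.pi fun _ => K) with hSdef
  have hScomp : IsCompact S :=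
    (isCompact_stdSimplex _ _).prod (isCompact_univ_pi fun _ => hK)
  have himage : convexHull ℝ K = φ '' S := by
    apply Set.Subset.antisymm
    · intro x hx
      obtain ⟨ι, hfin, z, ω, hrange, haff, hωpos, hωsum, hcomb⟩ :=
        eq_pos_convex_span_of_mem_convexHull hx
      set cgi := Fintype.card ι with hcgi
      have hcard : cgi ≤ N := by
        have h1 := haff.card_le_finrank_succ
        have h2 : Module.finrank ℝ ↥(vectorSpan ℝ (Set.range z)) ≤ Module.finrank ℝ V :=
          Submodule.finrank_le _
        omega
      set e := Fintype.equivFin ι with he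
      set w : Fin N → ℝ := fun i => if h : (i : ℕ) < cgi then ω (e.symm ⟨i, h⟩) else 0 with hw
      set u : Fin N → V := fun i => if h : (i : ℕ) < cgi then z (e.symm ⟨i, h⟩) else k₀ with hu
      refine ⟨(w, u), ⟨?_, ?_⟩, ?_⟩
      · constructor
        · intro i
          by_cases h : (i : ℕ) < cgi <;> simp [hw, h, (hωpos _).le]
        · calc ∑ i, w i = ∑ j : Fin cgi, ω (e.symm j) :=
                pad_sum hcard (fun j => ω (e.symm j))
            _ = 1 := by rw [Equiv.sum_comp e.symm ω, hωsum]
      · intro i _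
        by_cases h : (i : ℕ) < cgi
        · simp only [hu, dif_pos h]
          exact hrange (Set.mem_range_self _)
        · simp only [hu, dif_neg h]; exact hk₀
      · show ∑ i, w i • u i = x
        have : ∀ i : Fin N, w i • u i =
            if h : (i : ℕ) < cgi then ω (e.symm ⟨i, h⟩) • z (e.symm ⟨i, h⟩) else 0 := by
          intro i
          by_cases h : (i : ℕ) < cgi <;> simp [hw, hu, h]
        rw [Finset.sum_congr rfl fun i _ => this i]
        calc (∑ i : Fin N, if h : (i : ℕ) < cgi
                then ω (e.symm ⟨i, h⟩) • z (e.symm ⟨i, h⟩) else 0)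
            = ∑ j : Fin cgi, ω (e.symm j) • z (e.symm j) :=
              pad_sum hcard (fun j => ω (e.symm j) • z (e.symm j))
          _ = x := by rw [Equiv.sum_comp e.symm (fun j => ω j • z j), hcomb]
    · rintro x ⟨⟨w, u⟩, ⟨⟨hw0, hw1⟩, hu⟩, rfl⟩
      exact (convex_convexHull ℝ K).sum_mem (fun i _ => hw0 i) hw1
        (fun i _ => subset_convexHull ℝ K (hu i (Set.mem_univ i)))
  rw [himage]
  exact hScomp.image hφc

open MeasureTheory Metric

local notation "E" m => EuclideanSpace ℝ (Fin m)

lemma integral_inner_pow_closedBall (m p : ℕ) (hm : 1 ≤ m) (hp : 1 ≤ p) (hpe : Even p) :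
    ∃ c : ℝ, 0 < c ∧ ∀ x : E m,
      (∫ u in Metric.closedBall (0 : E m) 1, (inner ℝ u x : ℝ) ^ p) = c * ‖x‖ ^ p := by
  classical
  set B := Metric.closedBall (0 : E m) 1 with hB
  have hBc : IsCompact B := isCompact_closedBall _ _
  set g : (E m) → ℝ := fun x => ∫ u in B, (inner ℝ u x : ℝ) ^ p with hg
  have hcont : ∀ x : E m, Continuous fun u : E m => (inner ℝ u x : ℝ) ^ p := fun x =>
    (continuous_id.inner continuous_const).pow p
  have hint : ∀ x : E m, IntegrableOn (fun u : E m => (inner ℝ u x : ℝ) ^ p) B volume :=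
    fun x => ((hcont x).continuousOn).integrableOn_compact hBc
  -- invariance under linear isometries
  have hiso : ∀ (e : (E m) ≃ₗᵢ[ℝ] (E m)) (x : E m), g (e x) = g x := by
    intro e x
    have h1 : (⇑(e.symm)) '' B = B := by
      rw [hB, ← e.symm.coe_toIsometryEquiv, IsometryEquiv.image_closedBall]
      simp
    have h2 : ∀ u : E m, (inner ℝ u (e x) : ℝ) = (inner ℝ (e.symm u) x : ℝ) := by
      intro u
      conv_lhs => rw [← e.apply_symm_apply u, e.inner_map_map]
    have h3 : g (e x) = ∫ u in B, (inner ℝ (e.symm u) x : ℝ) ^ p := by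
      simp only [hg]
      exact setIntegral_congr_fun hBc.measurableSet (fun u _ => by rw [h2 u])
    have h4 := e.symm.measurePreserving.setIntegral_image_emb
      e.symm.toHomeomorph.measurableEmbedding (fun y => (inner ℝ y x : ℝ) ^ p) B
    rw [h3, ← h4, h1]
  -- homogeneity
  have hhom : ∀ (r : ℝ) (x : E m), g (r • x) = r ^ p * g x := by
    intro r x
    simp only [hg]
    rw [← integral_const_mul]
    exact setIntegral_congr_fun hBc.measurableSet fun u _ => by
      rw [real_inner_smul_right, mul_pow]
  -- the distinguished unit vector
  set i₀ : Fin m := ⟨0, hm⟩ with hi₀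
  set e₀ : E m := EuclideanSpace.single i₀ (1 : ℝ) with he₀def
  have he₀ : ‖e₀‖ = 1 := by rw [he₀def, EuclideanSpace.norm_single]; norm_num
  have hunit : ∀ y : E m, ‖y‖ = 1 → g y = g e₀ := by
    intro y hy
    have hrefl := Submodule.reflection_sub (show ‖e₀ - y‖ = ‖e₀ - y‖ from rfl)
    have h := Submodule.reflection_sub (he₀.trans hy.symm)
    calc g y = g ((Submodule.reflection (Submodule.span ℝ {e₀ - y})ᗮ) e₀) := by rw [h]
      _ = g e₀ := hiso _ _
  -- main formula
  refine ⟨g e₀, ?_, ?_⟩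
  · -- positivity
    have hnn : 0 ≤ᶠ[ae (volume.restrict B)] fun u : E m => (inner ℝ u e₀ : ℝ) ^ p :=
      Filter.Eventually.of_forall fun u => hpe.pow_nonneg _
    rw [show g e₀ = ∫ u in B, (inner ℝ u e₀ : ℝ) ^ p from rfl]
    rw [setIntegral_pos_iff_support_of_nonneg_ae hnn (hint e₀)]
    have hsub : Metric.ball ((2 : ℝ)⁻¹ • e₀) 4⁻¹ ⊆
        (Function.support fun u : E m => (inner ℝ u e₀ : ℝ) ^ p) ∩ B := by
      intro u hu
      rw [Metric.mem_ball, dist_eq_norm] at hu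
      constructor
      · have h5 : |(inner ℝ (u - (2 : ℝ)⁻¹ • e₀) e₀ : ℝ)| ≤ ‖u - (2 : ℝ)⁻¹ • e₀‖ * ‖e₀‖ :=
          abs_real_inner_le_norm _ _
        rw [he₀] at h5
        have h6 : (inner ℝ u e₀ : ℝ) = inner ℝ (u - (2 : ℝ)⁻¹ • e₀) e₀ + 2⁻¹ := by
          rw [inner_sub_left, real_inner_smul_left, real_inner_self_eq_norm_sq, he₀]
          ring
        have h7 : (0 : ℝ) < inner ℝ u e₀ := by
          have := abs_le.mp h5
          rw [h6]
          nlinarith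
        exact Function.mem_support.mpr (pow_ne_zero p (ne_of_gt h7))
      · rw [Metric.mem_closedBall, dist_zero_right]
        calc ‖u‖ = ‖(u - (2:ℝ)⁻¹ • e₀) + (2:ℝ)⁻¹ • e₀‖ := by rw [sub_add_cancel]
          _ ≤ ‖u - (2:ℝ)⁻¹ • e₀‖ + ‖(2:ℝ)⁻¹ • e₀‖ := norm_add_le _ _
          _ ≤ 4⁻¹ + 2⁻¹ := by
              refine add_le_add hu.le ?_
              rw [norm_smul, he₀]
              norm_num
          _ ≤ 1 := by norm_num
    calc (0 : ENNReal) < volume (Metric.ball ((2 : ℝ)⁻¹ • e₀) 4⁻¹) :=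
          measure_ball_pos _ _ (by norm_num)
      _ ≤ _ := measure_mono hsub
  · intro x
    by_cases hx : x = 0
    · subst hx
      have : ∀ u : E m, (inner ℝ u (0 : E m) : ℝ) ^ p = 0 := fun u => by
        rw [inner_zero_right, zero_pow (by omega)]
      rw [show (∫ u in B, (inner ℝ u (0 : E m) : ℝ) ^ p) = 0 by
        simp only [this, integral_zero], norm_zero, zero_pow (by omega : p ≠ 0), mul_zero]
    · have hy : ‖‖x‖⁻¹ • x‖ = 1 := norm_smul_inv_norm hx
      have hxx : x = ‖x‖ • (‖x‖⁻¹ • x) := by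
        rw [smul_smul, mul_inv_cancel₀ (norm_ne_zero_iff.mpr hx), one_smul]
      calc (∫ u in B, (inner ℝ u x : ℝ) ^ p) = g x := rfl
        _ = g (‖x‖ • (‖x‖⁻¹ • x)) := by rw [← hxx]
        _ = ‖x‖ ^ p * g (‖x‖⁻¹ • x) := hhom _ _
        _ = g e₀ * ‖x‖ ^ p := by rw [hunit _ hy, mul_comm]

open MeasureTheory Finset

/-- For every `m ≥ 1` and every even integer `p ≥ 2`, there are `n` with
`m ≤ n ≤ C(m+p-1, m-1)` and a linear isometric embedding of `ℓ_2^m(ℝ)` into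
`ℓ_p^n(ℝ)`, i.e. a linear `T : ℝ^m → ℝ^n` with
`Σ_j |(Tx)_j|^p = (Σ_i x_i²)^{p/2}` for all `x`. -/
theorem l2m_embeds_into_lpn_real (m : ℕ) (hm : 1 ≤ m) (p : ℕ) (hp2 : 2 ≤ p)
    (hpe : Even p) :
    ∃ n : ℕ, m ≤ n ∧ n ≤ Nat.choose (m + p - 1) (m - 1) ∧
      ∃ T : (Fin m → ℝ) →ₗ[ℝ] (Fin n → ℝ),
        ∀ x : Fin m → ℝ, ∑ j, |T x j| ^ p = (∑ i, x i ^ 2) ^ (p / 2) := by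
  classical
  obtain ⟨q, hq⟩ := hpe
  have hp1 : 1 ≤ p := by omega
  have hq1 : 1 ≤ q := by omega
  have hp0 : p ≠ 0 := by omega
  have hpq2 : p / 2 = q := by omega
  -- the moment index set
  set D : Finset (Fin m → ℕ) := Finset.piAntidiag Finset.univ p with hD
  -- the moment map and the coefficient map
  set F : EuclideanSpace ℝ (Fin m) → (↥D → ℝ) :=
    fun u β => ∏ i, u i ^ (β : Fin m → ℕ) i with hF
  set coeff : (Fin m → ℝ) → ↥D → ℝ := fun x β =>
    (Nat.multinomial Finset.univ (β : Fin m → ℕ) : ℝ) * ∏ i, x i ^ (β : Fin m → ℕ) i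
    with hcoeff
  -- multinomial expansion
  have hexp : ∀ (u : EuclideanSpace ℝ (Fin m)) (x : Fin m → ℝ),
      (∑ i, u i * x i) ^ p = ∑ β : ↥D, coeff x β * F u β := by
    intro u x
    have h1 : ∀ k : Fin m → ℕ, (∏ i, (u i * x i) ^ k i)
        = (∏ i, x i ^ k i) * ∏ i, u i ^ k i := by
      intro k
      rw [← Finset.prod_mul_distrib]
      exact Finset.prod_congr rfl fun i _ => by rw [mul_pow, mul_comm]
    calc (∑ i, u i * x i) ^ p
        = ∑ k ∈ D, (Nat.multinomial Finset.univ k : ℝ) * ∏ i, (u i * x i) ^ k i :=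
          Finset.sum_pow_eq_sum_piAntidiag Finset.univ (fun i => u i * x i) p
      _ = ∑ β : ↥D, coeff x β * F u β := by
          rw [← Finset.sum_coe_sort D
            (fun k => (Nat.multinomial Finset.univ k : ℝ) * ∏ i, (u i * x i) ^ k i)]
          exact Finset.sum_congr rfl fun β _ => by rw [h1]; simp only [hcoeff, hF]; ring
  -- inner product formula
  have hinner : ∀ (u : EuclideanSpace ℝ (Fin m)) (y : EuclideanSpace ℝ (Fin m)),
      (inner ℝ u y : ℝ) = ∑ i, u i * y i := by
    intro u y
    rw [PiLp.inner_apply]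
    exact Finset.sum_congr rfl fun i _ => by
      simp [RCLike.inner_apply, mul_comm]
  -- the ball and its basic properties
  obtain ⟨c, hc, hcint⟩ := integral_inner_pow_closedBall m p hm hp1 ⟨q, hq⟩
  set B := Metric.closedBall (0 : EuclideanSpace ℝ (Fin m)) 1 with hB
  have hBc : IsCompact B := isCompact_closedBall _ _
  have hvol0 : volume B ≠ 0 := by
    refine ((measure_ball_pos volume (0 : EuclideanSpace ℝ (Fin m)) one_pos).trans_le
      (measure_mono Metric.ball_subset_closedBall)).ne'
  have hvolt : volume B ≠ ⊤ := hBc.measure_lt_top.ne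
  -- continuity of F
  have hFc : Continuous F := by
    refine continuous_pi fun β => continuous_finset_prod _ fun i _ => ?_
    exact ((continuous_apply i).comp
      (PiLp.continuous_ofLp 2 (fun _ : Fin m => ℝ))).pow _
  have hFint : IntegrableOn F B volume := hFc.continuousOn.integrableOn_compact hBc
  -- the average of F over the ball
  set z : ↥D → ℝ := ⨍ u in B, F u with hz
  have hzmem : z ∈ convexHull ℝ (F '' B) := by
    refine (convex_convexHull ℝ (F '' B)).set_average_mem
      (isCompact_convexHull_of_isCompact (hBc.image hFc)).isClosed hvol0 hvolt ?_ hFint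
    filter_upwards [self_mem_ae_restrict hBc.measurableSet] with u hu
    exact subset_convexHull ℝ (F '' B) (Set.mem_image_of_mem F hu)
  -- the evaluation continuous linear functionals
  set L : (Fin m → ℝ) → ((↥D → ℝ) →L[ℝ] ℝ) := fun x => LinearMap.toContinuousLinearMap
    { toFun := fun G => ∑ β : ↥D, coeff x β * G β
      map_add' := fun G H => by
        simp only [Pi.add_apply, mul_add]
        exact Finset.sum_add_distrib
      map_smul' := fun r G => by
        simp only [Pi.smul_apply, smul_eq_mul, RingHom.id_apply]
        rw [Finset.mul_sum]
        exact Finset.sum_congr rfl fun β _ => by ring } with hL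
  have hLapp : ∀ (x : Fin m → ℝ) (G : ↥D → ℝ), L x G = ∑ β : ↥D, coeff x β * G β :=
    fun x G => rfl
  -- the analytic ingredient
  set c' : ℝ := (volume B).toReal⁻¹ * c with hc'
  have hc'pos : 0 < c' :=
    mul_pos (inv_pos.mpr (ENNReal.toReal_pos hvol0 hvolt)) hc
  -- value of L x on z
  have hLz : ∀ x : Fin m → ℝ,
      L x z = c' * ‖((WithLp.equiv 2 (Fin m → ℝ)).symm x)‖ ^ p := by
    intro x
    have h1 : z = (volume B).toReal⁻¹ • ∫ u in B, F u := by
      rw [hz, setAverage_eq, measureReal_def]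
    have h2 : L x (∫ u in B, F u) = ∫ u in B, L x (F u) :=
      ((L x).integral_comp_comm hFint).symm
    have h3 : ∀ u : EuclideanSpace ℝ (Fin m),
        L x (F u) = (inner ℝ u ((WithLp.equiv 2 (Fin m → ℝ)).symm x) : ℝ) ^ p := by
      intro u
      rw [hLapp, hinner u _]
      simp only [WithLp.equiv_symm_apply, PiLp.toLp_apply]
      exact (hexp u x).symm
    rw [h1, _root_.map_smul, smul_eq_mul, h2,
      setIntegral_congr_fun hBc.measurableSet (fun u _ => h3 u), hcint _, hc']
    ring
  -- extract a finite convex combination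
  obtain ⟨κ, hκfin, y, ω, hrange, _haff, hωpos, hωsum, hωcomb⟩ :=
    eq_pos_convex_span_of_mem_convexHull hzmem
  letI := hκfin
  have hchoice : ∀ j : κ, ∃ v, v ∈ B ∧ F v = y j := by
    intro j
    obtain ⟨v, hv, hfv⟩ := hrange (Set.mem_range_self j)
    exact ⟨v, hv, hfv⟩
  choose u' hu'B hu'F using hchoice
  -- conic Carathéodory
  obtain ⟨t', w', _ht'sub, hw'nn, hw'sum, hli⟩ :=
    cone_caratheodory (Fintype.card κ) Finset.univ (le_of_eq (Finset.card_univ))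
      ω (fun j => F (u' j)) (fun j _ => (hωpos j).le)
  have hw'z : ∑ j ∈ t', w' j • F (u' j) = z := by
    rw [hw'sum]
    rw [← hωcomb]
    exact Finset.sum_congr rfl fun j _ => by rw [hu'F]
  -- cardinality bounds
  have hcard_le : t'.card ≤ D.card := by
    have h1 : Fintype.card ↥t' ≤ Module.finrank ℝ (↥D → ℝ) :=
      LinearIndependent.fintype_card_le_finrank hli
    rwa [Module.finrank_fintype_fun_eq_card, Fintype.card_coe, Fintype.card_coe] at h1
  have hDcard : D.card ≤ (m + p - 1).choose (m - 1) := by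
    set i₀ : Fin m := ⟨0, hm⟩ with hi₀
    set ms : (Fin m → ℕ) → Multiset (Fin m) :=
      fun β => ∑ i, Multiset.replicate (β i) i with hms
    have hcount : ∀ (β : Fin m → ℕ) (j : Fin m), Multiset.count j (ms β) = β j := by
      intro β j
      simp [hms, Multiset.count_sum', Multiset.count_replicate]
    have hcardsum : ∀ (s : Finset (Fin m)) (f : Fin m → Multiset (Fin m)),
        Multiset.card (∑ i ∈ s, f i) = ∑ i ∈ s, Multiset.card (f i) := by
      intro s f
      induction s using Finset.cons_induction with
      | empty => simp
      | cons a s ha ih => simp [Finset.sum_cons, ih]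
    have hcardms : ∀ β ∈ D, Multiset.card (ms β) = p := by
      intro β hβ
      rw [hms]
      rw [hcardsum]
      simp only [Multiset.card_replicate]
      rw [hD, Finset.mem_piAntidiag] at hβ
      exact hβ.1
    set f : (Fin m → ℕ) → Sym (Fin m) p := fun β =>
      if h : Multiset.card (ms β) = p then ⟨ms β, h⟩ else Sym.replicate p i₀ with hf
    have h1 : D.card ≤ (Finset.univ : Finset (Sym (Fin m) p)).card := by
      refine Finset.card_le_card_of_injOn f (fun β _ => Finset.mem_univ _) ?_
      intro β hβ γ hγ hfeq
      have hβ' : β ∈ D := hβ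
      have hγ' : γ ∈ D := hγ
      rw [hf] at hfeq
      simp only [dif_pos (hcardms β hβ'), dif_pos (hcardms γ hγ')] at hfeq
      have hmseq : ms β = ms γ := by
        have h := congrArg Subtype.val hfeq
        simpa [hcardms β hβ', hcardms γ hγ'] using h
      funext j
      rw [← hcount β j, ← hcount γ j, hmseq]
    rw [Finset.card_univ, Sym.card_sym_eq_choose, Fintype.card_fin] at h1
    have h2 : (m + p - 1).choose p = (m + p - 1).choose (m - 1) := by
      rw [← Nat.choose_symm (by omega : m - 1 ≤ m + p - 1)]
      congr 1
      omega
    rw [h2] at h1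
    exact h1
  -- the design identity
  have hdesign : ∀ x : Fin m → ℝ,
      ∑ j ∈ t', w' j * (∑ i, u' j i * x i) ^ p = c' * (∑ i, x i ^ 2) ^ q := by
    intro x
    have hxnorm : ‖((WithLp.equiv 2 (Fin m → ℝ)).symm x)‖ ^ p = (∑ i, x i ^ 2) ^ q := by
      have h2 : ‖((WithLp.equiv 2 (Fin m → ℝ)).symm x)‖ ^ 2 = ∑ i, x i ^ 2 := by
        rw [EuclideanSpace.norm_eq]
        simp only [WithLp.equiv_symm_apply, PiLp.toLp_apply, Real.norm_eq_abs, sq_abs]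
        exact Real.sq_sqrt (Finset.sum_nonneg fun i _ => sq_nonneg _)
      rw [show p = 2 * q by omega, pow_mul, h2]
    calc ∑ j ∈ t', w' j * (∑ i, u' j i * x i) ^ p
        = ∑ j ∈ t', w' j * ∑ β : ↥D, coeff x β * F (u' j) β := by
          exact Finset.sum_congr rfl fun j _ => by rw [hexp (u' j) x]
      _ = ∑ β : ↥D, coeff x β * ∑ j ∈ t', w' j * F (u' j) β := by
          simp_rw [Finset.mul_sum]
          rw [Finset.sum_comm]
          exact Finset.sum_congr rfl fun β _ =>
            Finset.sum_congr rfl fun j _ => by ring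
      _ = L x z := by
          rw [hLapp]
          refine Finset.sum_congr rfl fun β _ => ?_
          congr 1
          rw [← hw'z]
          rw [Finset.sum_apply]
          exact Finset.sum_congr rfl fun j _ => rfl
      _ = c' * (∑ i, x i ^ 2) ^ q := by rw [hLz x, hxnorm]
  -- normalized weights
  set wh : κ → ℝ := fun j => w' j / c' with hwh
  have hwhnn : ∀ j ∈ t', 0 ≤ wh j := fun j hj => div_nonneg (hw'nn j hj) hc'pos.le
  have hdesign' : ∀ x : Fin m → ℝ,
      ∑ j ∈ t', wh j * (∑ i, u' j i * x i) ^ p = (∑ i, x i ^ 2) ^ q := by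
    intro x
    rw [show (∑ j ∈ t', wh j * (∑ i, u' j i * x i) ^ p)
        = (∑ j ∈ t', w' j * (∑ i, u' j i * x i) ^ p) / c' by
      rw [Finset.sum_div]
      exact Finset.sum_congr rfl fun j _ => by rw [hwh]; ring]
    rw [hdesign x]
    field_simp
  -- build the linear map
  set n := t'.card with hn
  set e : Fin n ≃ ↥t' := t'.equivFin.symm with he
  set A : Matrix (Fin n) (Fin m) ℝ :=
    fun j i => (wh ((e j) : κ)) ^ ((p : ℝ)⁻¹) * u' ((e j) : κ) i with hA
  set T := Matrix.mulVecLin A with hT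
  have hTapp : ∀ (x : Fin m → ℝ) (j : Fin n),
      T x j = (wh ((e j) : κ)) ^ ((p : ℝ)⁻¹) * ∑ i, u' ((e j) : κ) i * x i := by
    intro x j
    show (A.mulVec x) j = _
    rw [Matrix.mulVec, dotProduct, Finset.mul_sum]
    exact Finset.sum_congr rfl fun i _ => by rw [hA]; ring
  have habs : ∀ (x : Fin m → ℝ) (j : Fin n),
      |T x j| ^ p = wh ((e j) : κ) * (∑ i, u' ((e j) : κ) i * x i) ^ p := by
    intro x j
    have hwnn : 0 ≤ wh ((e j) : κ) := hwhnn _ (e j).2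
    rw [hTapp, abs_mul, mul_pow, abs_of_nonneg (Real.rpow_nonneg hwnn _),
      Real.rpow_inv_natCast_pow hwnn hp0, Even.pow_abs ⟨q, hq⟩]
  have hmain : ∀ x : Fin m → ℝ, ∑ j, |T x j| ^ p = (∑ i, x i ^ 2) ^ (p / 2) := by
    intro x
    rw [hpq2]
    calc ∑ j : Fin n, |T x j| ^ p
        = ∑ j : Fin n, wh ((e j) : κ) * (∑ i, u' ((e j) : κ) i * x i) ^ p :=
          Finset.sum_congr rfl fun j _ => habs x j
      _ = ∑ jj : ↥t', wh (jj : κ) * (∑ i, u' (jj : κ) i * x i) ^ p :=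
          Equiv.sum_comp e (fun jj : ↥t' => wh (jj : κ) * (∑ i, u' (jj : κ) i * x i) ^ p)
      _ = ∑ j ∈ t', wh j * (∑ i, u' j i * x i) ^ p :=
          Finset.sum_coe_sort t' (fun j => wh j * (∑ i, u' j i * x i) ^ p)
      _ = (∑ i, x i ^ 2) ^ q := hdesign' x
  -- injectivity and the lower bound for n
  have hinj : Function.Injective T := by
    rw [injective_iff_map_eq_zero]
    intro x hx
    have h1 : (∑ i, x i ^ 2) ^ (p / 2) = 0 := by
      rw [← hmain x]
      rw [hx]
      simp [zero_pow hp0]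
    have h2 : ∑ i, x i ^ 2 = 0 := by
      have := pow_eq_zero_iff (n := p / 2) (by omega) |>.mp h1
      exact this
    funext i
    have h3 := (Finset.sum_eq_zero_iff_of_nonneg (fun i _ => sq_nonneg (x i))).mp h2
    have := h3 i (Finset.mem_univ i)
    exact pow_eq_zero_iff (two_ne_zero) |>.mp this
  have hmn : m ≤ n := by
    have h1 := LinearMap.finrank_le_finrank_of_injective hinj
    rwa [Module.finrank_fintype_fun_eq_card, Module.finrank_fintype_fun_eq_card,
      Fintype.card_fin, Fintype.card_fin] at h1
  exact ⟨n, hmn, le_trans hcard_le hDcard, T, hmain⟩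
end

section
/- Let m, n be integers with 2 ≤ m ≤ n, and let q, p ∈ [1,∞] with q ≠ p, such that it is not the case that q = 2 and p is an even positive integer, and it is not the case that both q ∈ {1,∞} and p ∈ {1,∞}. Then there is no linear map T : ℝ^m → ℝ^n with ‖Tx‖_p = ‖x‖_q for all x ∈ ℝ^m; that is, ℓ_q^m(ℝ) does not embed isometrically into ℓ_p^n(ℝ). -/
open scoped ENNReal

/-- The `ℓ_p` norm on `ℝⁿ` for `p ∈ (0,∞]`: `(Σ_i |x_i|^p)^{1/p}` for finite `p` and
`max_i |x_i|` for `p = ∞`. -/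
noncomputable def lpNormR (p : ℝ≥0∞) {n : ℕ} (x : Fin n → ℝ) : ℝ :=
  if p = ∞ then ⨆ i, |x i|
  else (∑ i, |x i| ^ p.toReal) ^ (1 / p.toReal)

section Aux
open Real Filter Set Topology

lemma analyticAt_rpow_const {x : ℝ} (hx : 0 < x) (c : ℝ) :
    AnalyticAt ℝ (fun y : ℝ => y ^ c) x := by
  have hC : AnalyticAt ℂ (fun z : ℂ => z ^ (c:ℂ)) (x:ℂ) :=
    analyticAt_id.cpow analyticAt_const (Complex.ofReal_mem_slitPlane.2 hx)
  have h1 : AnalyticAt ℝ (fun y : ℝ => ((y:ℂ) ^ (c:ℂ)).re) x := by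
    apply (Complex.reCLM.analyticAt _).comp
    exact (hC.restrictScalars).comp (Complex.ofRealCLM.analyticAt x)
  apply h1.congr
  filter_upwards [eventually_gt_nhds hx] with y hy
  rw [← Complex.ofReal_cpow hy.le]
  simp

lemma AnalyticAt.rpow_const {f : ℝ → ℝ} {x : ℝ} (hf : AnalyticAt ℝ f x) (hfx : 0 < f x) (c : ℝ) :
    AnalyticAt ℝ (fun y => f y ^ c) x :=
  (analyticAt_rpow_const hfx c).comp hf

/-- `t ↦ |a + t b| ^ c` is analytic wherever `a + t b ≠ 0`. -/
lemma analyticAt_abs_affine_rpow (a b c t0 : ℝ) (h : a + t0 * b ≠ 0) :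
    AnalyticAt ℝ (fun t : ℝ => |a + t * b| ^ c) t0 := by
  have haff : AnalyticAt ℝ (fun t : ℝ => a + t * b) t0 :=
    analyticAt_const.add (analyticAt_id.mul analyticAt_const)
  have hcont : ContinuousAt (fun t : ℝ => a + t * b) t0 := haff.continuousAt
  rcases h.lt_or_gt with hneg | hpos
  · have h2 : AnalyticAt ℝ (fun t : ℝ => (-(a + t * b)) ^ c) t0 :=
      (haff.neg).rpow_const (by simp only [Pi.neg_apply]; linarith) c
    apply h2.congr
    filter_upwards [hcont.eventually (eventually_lt_nhds hneg)] with t ht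
    simp only [abs_of_neg ht]
  · have h2 : AnalyticAt ℝ (fun t : ℝ => (a + t * b) ^ c) t0 :=
      haff.rpow_const hpos c
    apply h2.congr
    filter_upwards [hcont.eventually (eventually_gt_nhds hpos)] with t ht
    simp only [abs_of_pos ht]

/-- `t ↦ (1 + |t| ^ a) ^ c` is analytic at every `t0 ≠ 0`. -/
lemma analyticAt_one_add_abs_rpow (a c t0 : ℝ) (h : t0 ≠ 0) :
    AnalyticAt ℝ (fun t : ℝ => (1 + |t| ^ a) ^ c) t0 := by
  have habs : AnalyticAt ℝ (fun t : ℝ => |(0:ℝ) + t * 1| ^ a) t0 :=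
    analyticAt_abs_affine_rpow 0 1 a t0 (by simpa using h)
  have habs' : AnalyticAt ℝ (fun t : ℝ => |t| ^ a) t0 := by
    apply habs.congr
    filter_upwards with t; norm_num
  apply AnalyticAt.rpow_const (analyticAt_const.add habs')
  have : (0:ℝ) ≤ |t0| ^ a := rpow_nonneg (abs_nonneg _) _
  simp only [Pi.add_apply]
  linarith

/-- precomposition with translation -/
lemma analyticAt_abs_rpow_of_shift {c t0 : ℝ} (h : AnalyticAt ℝ (fun t : ℝ => |t - t0| ^ c) t0) :
    AnalyticAt ℝ (fun s : ℝ => |s| ^ c) 0 := by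
  have hsh : AnalyticAt ℝ (fun s : ℝ => s + t0) 0 := analyticAt_id.add analyticAt_const
  have := AnalyticAt.comp (g := fun t : ℝ => |t - t0| ^ c) (f := fun s : ℝ => s + t0) (x := 0)
      (by simpa using h) hsh
  simp only [Function.comp_def] at this
  apply this.congr
  filter_upwards with s
  simp

lemma not_analyticAt_abs_rpow {p : ℝ} (hp : 0 < p) (hpe : ∀ k : ℕ, p ≠ 2 * k) :
    ¬ AnalyticAt ℝ (fun s : ℝ => |s| ^ p) 0 := by
  intro h
  have hne : ¬ ∀ᶠ s in 𝓝 (0:ℝ), |s| ^ p = 0 := by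
    intro hev
    obtain ⟨ε, hε, hball⟩ := Metric.eventually_nhds_iff.mp hev
    have h1 : |ε/2| ^ p = 0 := hball (by
      rw [dist_zero_right, Real.norm_eq_abs, abs_of_pos (by linarith)]; linarith)
    have hpos : (0:ℝ) < |ε/2| ^ p := rpow_pos_of_pos (abs_pos.2 (by linarith)) p
    rw [h1] at hpos; exact lt_irrefl _ hpos
  obtain ⟨n, g, hg_an, hg_ne, hg_eq⟩ := (h.exists_eventuallyEq_pow_smul_nonzero_iff).mpr hne
  have hgc : Tendsto g (𝓝 (0:ℝ)) (𝓝 (g 0)) := hg_an.continuousAt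
  obtain ⟨ε, hε, hball⟩ := Metric.eventually_nhds_iff.mp hg_eq
  have key : ∀ s : ℝ, |s| < ε → |s| ^ p = s ^ n * g s := fun s hsε => by
    have := hball (by rw [dist_zero_right, Real.norm_eq_abs]; exact hsε)
    rwa [sub_zero, smul_eq_mul] at this
  have keyR : ∀ s : ℝ, 0 < s → |s| < ε → g s = s ^ (p - (n:ℝ)) := by
    intro s hs hsε
    have h1 := key s hsε
    rw [abs_of_pos hs] at h1
    have h2 : s ^ (n:ℝ) * g s = s ^ p := by rw [rpow_natCast]; linarith
    have h3 : g s = s ^ p / s ^ (n:ℝ) := by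
      field_simp [ne_of_gt (rpow_pos_of_pos hs (n:ℝ))] at h2 ⊢; linarith
    rw [h3, ← rpow_sub hs]
  -- g tends to g 0 within (0, ∞)
  have hgR : Tendsto g (𝓝[>] (0:ℝ)) (𝓝 (g 0)) := hgc.mono_left nhdsWithin_le_nhds
  have hevR : ∀ᶠ s in 𝓝[>] (0:ℝ), g s = s ^ (p - (n:ℝ)) := by
    filter_upwards [Ioo_mem_nhdsGT_of_mem (by constructor <;> [rfl; exact hε] :
        (0:ℝ) ∈ Ico 0 ε)] with s hs
    exact keyR s hs.1 (by rw [abs_of_pos hs.1]; exact hs.2)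
  rcases lt_trichotomy p (n:ℝ) with hlt | heq | hgt
  · -- g = s ^ (negative) → atTop, contradiction with convergence
    have h0 : Tendsto (fun s : ℝ => s ^ ((n:ℝ) - p)) (𝓝[>] (0:ℝ)) (𝓝[>] (0:ℝ)) := by
      apply tendsto_nhdsWithin_of_tendsto_nhds_of_eventually_within
      · have : ContinuousAt (fun s : ℝ => s ^ ((n:ℝ) - p)) 0 :=
          Real.continuousAt_rpow_const 0 _ (Or.inr (by linarith))
        simpa [Real.zero_rpow (by linarith : (n:ℝ) - p ≠ 0)] using
          this.tendsto.mono_left nhdsWithin_le_nhds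
      · filter_upwards [self_mem_nhdsWithin] with s hs
        exact rpow_pos_of_pos hs _
    have hTop : Tendsto g (𝓝[>] (0:ℝ)) atTop := by
      apply Tendsto.congr' _ h0.inv_tendsto_nhdsGT_zero
      filter_upwards [hevR, self_mem_nhdsWithin] with s hs hs'
      rw [Pi.inv_apply, ← rpow_neg (le_of_lt hs'), neg_sub, hs]
    exact (hgR.not_tendsto (disjoint_nhds_atTop _)) hTop
  · -- p = n, n is odd, g = -1 on left, 1 on right
    have hnodd : Odd n := by
      rcases Nat.even_or_odd n with he | ho
      · obtain ⟨k, hk⟩ := he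
        exact absurd (by rw [heq, hk]; push_cast; ring) (hpe k)
      · exact ho
    have hn0 : n ≠ 0 := by rintro rfl; simp at heq; exact absurd heq (ne_of_gt hp)
    have hR : g 0 = 1 := by
      apply tendsto_nhds_unique (hgR.congr' _) tendsto_const_nhds
      filter_upwards [hevR] with s hs
      rw [hs, heq, sub_self, rpow_zero]
    have hL : g 0 = -1 := by
      have hgL : Tendsto g (𝓝[<] (0:ℝ)) (𝓝 (g 0)) := hgc.mono_left nhdsWithin_le_nhds
      apply tendsto_nhds_unique (hgL.congr' _) tendsto_const_nhds
      filter_upwards [Ioo_mem_nhdsLT_of_mem (by constructor <;> [linarith; rfl] :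
          (0:ℝ) ∈ Ioc (-ε) 0)] with s hs
      have hsneg : s < 0 := hs.2
      have h1 := key s (by rw [abs_of_neg hsneg]; linarith [hs.1])
      have h2 : |s| ^ p = |s| ^ n := by rw [heq, rpow_natCast]
      have h3 : s ^ n = -(|s| ^ n) := by
        rw [abs_of_neg hsneg, ← Odd.neg_pow hnodd, neg_neg]
      rw [h2, h3] at h1
      have h4 : |s| ^ n ≠ 0 := pow_ne_zero _ (abs_ne_zero.2 (ne_of_lt hsneg))
      field_simp at h1
      linarith [(mul_left_cancel₀ h4 (by rw [show g s = -1 by linarith [h1]] : |s| ^ n * g s = |s| ^ n * (-1)))]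
    rw [hR] at hL; norm_num at hL
  · -- p > n : g → 0, so g 0 = 0
    have h0 : Tendsto (fun s : ℝ => s ^ (p - (n:ℝ))) (𝓝[>] (0:ℝ)) (𝓝 0) := by
      have : ContinuousAt (fun s : ℝ => s ^ (p - (n:ℝ))) 0 :=
        Real.continuousAt_rpow_const 0 _ (Or.inr (by linarith))
      simpa [Real.zero_rpow (by linarith : p - (n:ℝ) ≠ 0)] using
        this.tendsto.mono_left nhdsWithin_le_nhds
    have heve : g =ᶠ[𝓝[>] (0:ℝ)] fun s => s ^ (p - (n:ℝ)) := hevR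
    have h1 : Tendsto (fun s : ℝ => s ^ (p - (n:ℝ))) (𝓝[>] (0:ℝ)) (𝓝 (g 0)) :=
      Tendsto.congr' heve hgR
    exact hg_ne (tendsto_nhds_unique h1 h0)

/-- Ending lemma: if `u, v` have disjoint supports, the ℓ_p/ℓ_q identity forces `p = q`. -/
lemma ending_lemma {N : ℕ} (u v : Fin N → ℝ) {p' q' : ℝ} (hp0 : 0 < p') (hq0 : 0 < q')
    (hu : ∑ i, |u i| ^ p' = 1) (hv : ∑ i, |v i| ^ p' = 1)
    (hsum : ∀ t : ℝ, ∑ i, |u i + t * v i| ^ p' = (1 + |t| ^ q') ^ (p' / q'))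
    (hdisj : ∀ i, u i = 0 ∨ v i = 0) : p' = q' := by
  have h1 : ∑ i, |u i + (1:ℝ) * v i| ^ p' = 2 := by
    have : ∀ i : Fin N, |u i + (1:ℝ) * v i| ^ p' = |u i| ^ p' + |v i| ^ p' := by
      intro i
      rcases hdisj i with h | h <;>
        simp [h, Real.zero_rpow (ne_of_gt hp0)]
    rw [Finset.sum_congr rfl fun i _ => this i, Finset.sum_add_distrib, hu, hv]
    norm_num
  have h2 := hsum 1
  rw [h1] at h2
  have h3 : ((2:ℝ)) ^ (p'/q') = 2 := by
    rw [show ((1:ℝ) + |(1:ℝ)| ^ q') = 2 by norm_num] at h2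
    exact h2.symm
  have h4 : (p'/q') * Real.log 2 = Real.log 2 := by
    rw [← Real.log_rpow (by norm_num : (0:ℝ) < 2), h3]
  have hl2 : Real.log 2 ≠ 0 := by
    have := Real.log_pos (by norm_num : (1:ℝ) < 2)
    linarith
  have h5 : p'/q' = 1 := by
    have := mul_right_cancel₀ hl2 (by rw [h4, one_mul] : (p'/q') * Real.log 2 = 1 * Real.log 2)
    exact this
  field_simp at h5
  exact h5

/-- If `p'` is not an even integer, the supports of `u` and `v` must be disjoint. -/
lemma disjoint_of_not_even {N : ℕ} (u v : Fin N → ℝ) {p' q' : ℝ} (hp1 : 1 ≤ p') (hq0 : 0 < q')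
    (hsum : ∀ t : ℝ, ∑ i, |u i + t * v i| ^ p' = (1 + |t| ^ q') ^ (p' / q'))
    (hpe : ∀ k : ℕ, p' ≠ 2 * k) : ∀ i, u i = 0 ∨ v i = 0 := by
  classical
  by_contra hcon
  push_neg at hcon
  obtain ⟨i, hu0, hv0⟩ := hcon
  set t0 : ℝ := -(u i) / (v i) with ht0def
  have ht0 : t0 ≠ 0 := by
    rw [ht0def]
    exact div_ne_zero (neg_ne_zero.2 hu0) hv0
  set Z : Finset (Fin N) := Finset.univ.filter (fun j => u j + t0 * v j = 0) with hZdef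
  have hiZ : i ∈ Z := by
    rw [hZdef, Finset.mem_filter]
    refine ⟨Finset.mem_univ _, ?_⟩
    rw [ht0def]; field_simp; ring
  set c : ℝ := ∑ j ∈ Z, |v j| ^ p' with hcdef
  have hc : 0 < c := by
    rw [hcdef]
    have h1 : |v i| ^ p' ≤ c :=
      Finset.single_le_sum (fun j _ => rpow_nonneg (abs_nonneg _) _) hiZ
    have h2 : (0:ℝ) < |v i| ^ p' := rpow_pos_of_pos (abs_pos.2 hv0) _
    linarith
  -- split the sum
  have hsplit : ∀ t : ℝ, ∑ j ∈ Z, |u j + t * v j| ^ p' = c * |t - t0| ^ p' := by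
    intro t
    rw [hcdef, Finset.sum_mul]
    apply Finset.sum_congr rfl
    intro j hj
    rw [hZdef, Finset.mem_filter] at hj
    have huj : u j = -t0 * v j := by linarith [hj.2]
    rw [huj, show -t0 * v j + t * v j = (t - t0) * v j by ring, abs_mul,
      Real.mul_rpow (abs_nonneg _) (abs_nonneg _)]
    ring
  -- the complementary sum is analytic at t0
  have hanalytic_rest : AnalyticAt ℝ
      (fun t => ∑ j ∈ Finset.univ.filter (fun j => ¬ (u j + t0 * v j = 0)),
        |u j + t * v j| ^ p') t0 := by
    apply Finset.analyticAt_fun_sum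
    intro j hj
    rw [Finset.mem_filter] at hj
    exact analyticAt_abs_affine_rpow (u j) (v j) p' t0 hj.2
  have hganalytic : AnalyticAt ℝ (fun t : ℝ => (1 + |t| ^ q') ^ (p' / q')) t0 :=
    analyticAt_one_add_abs_rpow q' (p'/q') t0 ht0
  have hF : AnalyticAt ℝ (fun t : ℝ => (1/c) * ((1 + |t| ^ q') ^ (p' / q') -
      ∑ j ∈ Finset.univ.filter (fun j => ¬ (u j + t0 * v j = 0)), |u j + t * v j| ^ p')) t0 :=
    analyticAt_const.mul (hganalytic.sub hanalytic_rest)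
  have hkey : AnalyticAt ℝ (fun t : ℝ => |t - t0| ^ p') t0 := by
    apply hF.congr
    filter_upwards with t
    have h1 := hsum t
    rw [← Finset.sum_filter_add_sum_filter_not Finset.univ
      (fun j => u j + t0 * v j = 0) (fun j => |u j + t * v j| ^ p')] at h1
    rw [← hZdef] at h1
    rw [hsplit t] at h1
    field_simp
    linarith
  exact not_analyticAt_abs_rpow (by linarith : (0:ℝ) < p') hpe
    (analyticAt_abs_rpow_of_shift hkey)

lemma abs_rpow_even {k : ℕ} {p' : ℝ} (hp'k : p' = 2 * (k:ℝ)) (x : ℝ) :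
    |x| ^ p' = x ^ (2 * k) := by
  rw [hp'k, show (2 * (k:ℝ)) = ((2*k : ℕ) : ℝ) by push_cast; ring,
    Real.rpow_natCast, Even.pow_abs (even_two_mul k)]

lemma caseC2a {N : ℕ} (u v : Fin N → ℝ) {p' q' : ℝ} {k : ℕ} (hk : 0 < k)
    (hp'k : p' = 2 * (k:ℝ)) (hq1 : 1 ≤ q') (hq2 : q' < 2)
    (hu : ∑ i, |u i| ^ p' = 1)
    (hsum : ∀ t : ℝ, ∑ i, |u i + t * v i| ^ p' = (1 + |t| ^ q') ^ (p' / q')) : False := by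
  have hp0 : (0:ℝ) < p' := by rw [hp'k]; positivity
  set f : ℝ → ℝ := fun t => ∑ i, (u i + t * v i) ^ (2 * k) with hfdef
  have hfeq : ∀ t, f t = ∑ i, |u i + t * v i| ^ p' := by
    intro t
    exact Finset.sum_congr rfl fun i _ => (abs_rpow_even hp'k _).symm
  have hfan : AnalyticAt ℝ f 0 := by
    apply Finset.analyticAt_fun_sum
    intro j _
    exact (analyticAt_const.add (analyticAt_id.mul analyticAt_const)).pow _
  have hf0 : f 0 = 1 := by
    rw [hfeq 0, ← hu]
    apply Finset.sum_congr rfl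
    intro i _; norm_num
  have hA : AnalyticAt ℝ (fun t => f t ^ (q'/p') - 1) 0 :=
    (hfan.rpow_const (by rw [hf0]; norm_num) _).sub analyticAt_const
  have heq : (fun t : ℝ => |t| ^ q') = fun t => f t ^ (q'/p') - 1 := by
    funext t
    rw [hfeq t, hsum t, ← Real.rpow_mul (by positivity),
      div_mul_div_comm, mul_comm p' q', div_self (by positivity), Real.rpow_one]
    ring
  have : AnalyticAt ℝ (fun t : ℝ => |t| ^ q') 0 := by rw [heq]; exact hA
  refine not_analyticAt_abs_rpow (by linarith) ?_ this
  intro k' hk'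
  rcases Nat.eq_zero_or_pos k' with rfl | hk'pos
  · simp at hk'; linarith
  · have : (2:ℝ) ≤ 2 * k' := by
      have : (1:ℝ) ≤ (k':ℝ) := by exact_mod_cast hk'pos
      linarith
    linarith

lemma binom_ineq (k : ℕ) (hk : 0 < k) (a x : ℝ) :
    2 * a ^ (2*k) + 2 * ((2*k).choose 2 : ℝ) * (a ^ (2*k-2) * x^2)
      ≤ (a + x) ^ (2*k) + (a - x) ^ (2*k) := by
  have hxx : (a - x) ^ (2*k) = (a + (-x)) ^ (2*k) := by ring_nf
  rw [add_pow, hxx, add_pow, ← Finset.sum_add_distrib]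
  set F : ℕ → ℝ := fun j => a ^ j * x ^ (2*k - j) * ((2*k).choose j) +
    a ^ j * (-x) ^ (2*k - j) * ((2*k).choose j) with hFdef
  have hsub : ({2*k - 2, 2*k} : Finset ℕ) ⊆ Finset.range (2*k+1) := by
    intro j hj
    simp only [Finset.mem_insert, Finset.mem_singleton] at hj
    rcases hj with rfl | rfl <;> exact Finset.mem_range.mpr (by omega)
  have hnn : ∀ j ∈ Finset.range (2*k+1), j ∉ ({2*k - 2, 2*k} : Finset ℕ) → 0 ≤ F j := by
    intro j hj _
    rw [Finset.mem_range] at hj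
    rcases Nat.even_or_odd (2*k - j) with he | ho
    · have hje : Even j := by
        rcases he with ⟨c, hc⟩; refine ⟨k - c, by omega⟩
      have h1 : (-x) ^ (2*k - j) = x ^ (2*k - j) := he.neg_pow x
      rw [hFdef]
      simp only [h1]
      have : (0:ℝ) ≤ a ^ j * x ^ (2*k-j) * ((2*k).choose j) :=
        mul_nonneg (mul_nonneg (hje.pow_nonneg a) (he.pow_nonneg x)) (by positivity)
      linarith
    · have h1 : (-x) ^ (2*k - j) = -(x ^ (2*k - j)) := ho.neg_pow x
      rw [hFdef]; simp only [h1]; ring_nf; simp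
  have hle := Finset.sum_le_sum_of_subset_of_nonneg hsub hnn
  have hpair : ∑ j ∈ ({2*k - 2, 2*k} : Finset ℕ), F j = F (2*k-2) + F (2*k) := by
    rw [Finset.sum_pair (by omega : 2*k - 2 ≠ 2*k)]
  have hF2k : F (2*k) = 2 * a ^ (2*k) := by
    rw [hFdef]; simp; ring
  have hF2k2 : F (2*k - 2) = 2 * ((2*k).choose 2 : ℝ) * (a ^ (2*k-2) * x^2) := by
    rw [hFdef]
    have h2 : 2*k - (2*k - 2) = 2 := by omega
    have h3 : (2*k).choose (2*k - 2) = (2*k).choose 2 :=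
      Nat.choose_symm (by omega)
    simp only []
    rw [h2, h3]
    ring
  calc 2 * a ^ (2*k) + 2 * ((2*k).choose 2 : ℝ) * (a ^ (2*k-2) * x^2)
      = ∑ j ∈ ({2*k - 2, 2*k} : Finset ℕ), F j := by rw [hpair, hF2k, hF2k2]; ring
    _ ≤ _ := hle

lemma tendsto_aux (r q' : ℝ) (hq2 : 2 < q') :
    Tendsto (fun t : ℝ => ((1 + t ^ q') ^ r - 1) / t ^ (2:ℕ)) (nhdsWithin 0 (Ioi 0)) (nhds 0) := by
  have h1 : HasDerivAt (fun s : ℝ => (1+s) ^ r) (1 * r * (1+(0:ℝ)) ^ (r-1)) 0 :=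
    (hasDerivAt_id (0:ℝ)).const_add (1:ℝ) |>.rpow_const (Or.inl (by norm_num))
  have h1' : HasDerivAt (fun s : ℝ => (1+s) ^ r) r 0 := by
    convert h1 using 1; norm_num
  have hslope := hasDerivAt_iff_tendsto_slope.mp h1'
  have h2 : Tendsto (fun t : ℝ => t ^ q') (nhdsWithin 0 (Ioi 0)) (nhdsWithin 0 {x | x ≠ 0}) := by
    apply tendsto_nhdsWithin_of_tendsto_nhds_of_eventually_within
    · have hc : ContinuousAt (fun t : ℝ => t ^ q') 0 :=
        Real.continuousAt_rpow_const 0 q' (Or.inr (by linarith))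
      have := hc.tendsto.mono_left (nhdsWithin_le_nhds (s := Ioi (0:ℝ)))
      simpa [Real.zero_rpow (by linarith : q' ≠ 0)] using this
    · filter_upwards [self_mem_nhdsWithin] with t ht
      exact (Real.rpow_pos_of_pos ht q').ne'
  have h3 : Tendsto (fun t : ℝ => t ^ (q'-2)) (nhdsWithin 0 (Ioi 0)) (nhds 0) := by
    have hc : ContinuousAt (fun t : ℝ => t ^ (q'-2)) 0 :=
      Real.continuousAt_rpow_const 0 _ (Or.inr (by linarith))
    have := hc.tendsto.mono_left (nhdsWithin_le_nhds (s := Ioi (0:ℝ)))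
    simpa [Real.zero_rpow (by linarith : q' - 2 ≠ 0)] using this
  have hmul := (hslope.comp h2).mul h3
  rw [mul_zero] at hmul
  apply hmul.congr'
  filter_upwards [self_mem_nhdsWithin] with t ht
  have ht0 : (0:ℝ) < t := ht
  have htq : (0:ℝ) < t ^ q' := Real.rpow_pos_of_pos ht0 q'
  simp only [Function.comp, slope_def_field, add_zero, sub_zero, Real.one_rpow]
  have hy : t ^ q' = t ^ (2:ℕ) * t ^ (q' - 2) := by
    rw [← Real.rpow_natCast t 2, ← Real.rpow_add ht0]; norm_num
  rw [hy]
  have h2' : t ^ (2:ℕ) ≠ 0 := by positivity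
  have h3' : t ^ (q'-2) ≠ 0 := (Real.rpow_pos_of_pos ht0 _).ne'
  field_simp

lemma abs_rpow_even' {k : ℕ} {p' : ℝ} (hp'k : p' = 2 * (k:ℝ)) (x : ℝ) :
    |x| ^ p' = x ^ (2 * k) := by
  rw [hp'k, show (2 * (k:ℝ)) = ((2*k : ℕ) : ℝ) by push_cast; ring,
    Real.rpow_natCast, Even.pow_abs (even_two_mul k)]

lemma caseC2c_disjoint {N : ℕ} (u v : Fin N → ℝ) {p' q' : ℝ} {k : ℕ} (hk : 0 < k)
    (hp'k : p' = 2 * (k:ℝ)) (hq2 : 2 < q')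
    (hu : ∑ i, |u i| ^ p' = 1)
    (hsum : ∀ t : ℝ, ∑ i, |u i + t * v i| ^ p' = (1 + |t| ^ q') ^ (p' / q')) :
    ∀ i, u i = 0 ∨ v i = 0 := by
  set B : ℝ := ((2*k).choose 2 : ℝ) with hBdef
  have hB : 0 < B := by
    rw [hBdef]
    exact_mod_cast Nat.choose_pos (by omega)
  set S2 : ℝ := ∑ i, u i ^ (2*k-2) * v i ^ 2 with hS2def
  have hS2nn : 0 ≤ S2 := by
    apply Finset.sum_nonneg
    intro i _
    exact mul_nonneg (Even.pow_nonneg ⟨k-1, by omega⟩ _) (sq_nonneg _)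
  have hu' : ∑ i, u i ^ (2*k) = 1 := by
    rw [← hu]; exact Finset.sum_congr rfl fun i _ => (abs_rpow_even' hp'k _).symm
  -- main inequality
  have key : ∀ t : ℝ, 2 + 2*B*S2*t^2 ≤ 2 * (1 + |t| ^ q') ^ (p'/q') := by
    intro t
    have hsum' : ∀ s : ℝ, ∑ i, (u i + s * v i) ^ (2*k) = (1 + |s| ^ q') ^ (p'/q') := by
      intro s
      rw [← hsum s]
      exact Finset.sum_congr rfl fun i _ => (abs_rpow_even' hp'k _).symm
    have hbig := Finset.sum_le_sum (s := Finset.univ)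
      (fun i (_ : i ∈ Finset.univ) => binom_ineq k hk (u i) (t * v i))
    rw [Finset.sum_add_distrib, Finset.sum_add_distrib] at hbig
    have e1 : ∑ i, (u i + t * v i) ^ (2*k) = (1 + |t| ^ q') ^ (p'/q') := hsum' t
    have e2 : ∑ i, (u i - t * v i) ^ (2*k) = (1 + |t| ^ q') ^ (p'/q') := by
      have := hsum' (-t)
      rw [abs_neg] at this
      rw [← this]
      exact Finset.sum_congr rfl fun i _ => by ring_nf
    rw [e1, e2] at hbig
    have e3 : ∑ i, 2 * u i ^ (2*k) = 2 := by
      rw [← Finset.mul_sum, hu']; norm_num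
    have e4 : ∑ i, 2*B*(u i ^ (2*k-2) * (t * v i)^2) = 2*B*S2*t^2 := by
      have hterm : ∀ i : Fin N, 2*B*(u i ^ (2*k-2) * (t * v i)^2)
          = (2*B*t^2) * (u i ^ (2*k-2) * v i ^2) := fun i => by ring
      rw [Finset.sum_congr rfl fun i _ => hterm i, ← Finset.mul_sum, ← hS2def]
      ring
    rw [hBdef] at e4
    rw [e3, e4] at hbig
    linarith
  -- deduce B * S2 ≤ 0 by a limit argument
  have hBS2 : B * S2 ≤ 0 := by
    have hlim := tendsto_aux (p'/q') q' hq2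
    apply ge_of_tendsto hlim
    filter_upwards [self_mem_nhdsWithin] with t ht
    have ht0 : (0:ℝ) < t := ht
    have h1 := key t
    rw [abs_of_pos ht0] at h1
    rw [le_div_iff₀ (by positivity)]
    nlinarith
  have hS2 : S2 = 0 := by nlinarith
  have hterm_nonneg : ∀ j : Fin N, 0 ≤ u j ^ (2*k-2) * v j ^ 2 := fun j =>
    mul_nonneg (Even.pow_nonneg (⟨k-1, by omega⟩ : Even (2*k-2)) (u j)) (sq_nonneg (v j))
  have hall := (Finset.sum_eq_zero_iff_of_nonneg
    (fun j (_ : j ∈ Finset.univ) => hterm_nonneg j)).mp (by rw [← hS2def]; exact hS2)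
  intro i
  have hi : u i ^ (2*k-2) * v i ^ 2 = 0 := hall i (Finset.mem_univ i)
  rcases mul_eq_zero.mp hi with h | h
  · by_cases h0 : 2*k-2 = 0
    · rw [h0, pow_zero] at h; norm_num at h
    · exact Or.inl (pow_eq_zero_iff h0 |>.mp h)
  · exact Or.inr (pow_eq_zero_iff (two_ne_zero) |>.mp h)

lemma midpoint_rpow_le {p' : ℝ} (hp : 1 < p') (x y : ℝ) :
    |x/2 + y/2| ^ p' ≤ |x| ^ p' / 2 + |y| ^ p' / 2 := by
  have habs : |x/2 + y/2| ≤ (1/2:ℝ) * |x| + (1/2) * |y| := by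
    calc |x/2+y/2| ≤ |x/2| + |y/2| := abs_add_le _ _
    _ = 1/2*|x| + 1/2*|y| := by rw [abs_div, abs_div]; norm_num; ring
  have h1 : |x/2 + y/2| ^ p' ≤ ((1/2:ℝ) * |x| + (1/2) * |y|) ^ p' :=
    Real.rpow_le_rpow (abs_nonneg _) habs (by linarith)
  have hconv := (strictConvexOn_rpow hp).convexOn.2 (mem_Ici.2 (abs_nonneg x))
    (mem_Ici.2 (abs_nonneg y)) (by norm_num : (0:ℝ) ≤ 1/2) (by norm_num : (0:ℝ) ≤ 1/2)
    (by norm_num)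
  simp only [smul_eq_mul] at hconv
  calc |x/2 + y/2| ^ p' ≤ ((1/2:ℝ) * |x| + (1/2) * |y|) ^ p' := h1
    _ ≤ 1/2 * |x| ^ p' + 1/2 * |y| ^ p' := hconv
    _ = |x| ^ p' / 2 + |y| ^ p' / 2 := by ring

lemma midpoint_rpow_lt {p' : ℝ} (hp : 1 < p') {x y : ℝ} (hxy : x ≠ y) :
    |x/2 + y/2| ^ p' < |x| ^ p' / 2 + |y| ^ p' / 2 := by
  rcases eq_or_ne |x| |y| with habs | habs
  · rcases abs_eq_abs.mp habs with h | h
    · exact absurd h hxy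
    · have hy0 : y ≠ 0 := by
        intro h0; apply hxy; rw [h0] at h ⊢; simpa using h
      rw [h, show (-y)/2 + y/2 = 0 by ring, abs_zero,
        Real.zero_rpow (by linarith : p' ≠ 0), abs_neg]
      have : (0:ℝ) < |y| ^ p' := Real.rpow_pos_of_pos (abs_pos.2 hy0) _
      linarith
  · have h1 : |x/2 + y/2| ^ p' ≤ ((1/2:ℝ) * |x| + (1/2) * |y|) ^ p' := by
      apply Real.rpow_le_rpow (abs_nonneg _) _ (by linarith)
      calc |x/2+y/2| ≤ |x/2| + |y/2| := abs_add_le _ _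
      _ = 1/2*|x| + 1/2*|y| := by rw [abs_div, abs_div]; norm_num; ring
    have h2 := (strictConvexOn_rpow hp).2 (mem_Ici.2 (abs_nonneg x))
      (mem_Ici.2 (abs_nonneg y)) habs (by norm_num : (0:ℝ) < 1/2)
      (by norm_num : (0:ℝ) < 1/2) (by norm_num)
    simp only [smul_eq_mul] at h2
    calc |x/2 + y/2| ^ p' ≤ ((1/2:ℝ) * |x| + (1/2) * |y|) ^ p' := h1
      _ < 1/2 * |x| ^ p' + 1/2 * |y| ^ p' := h2
      _ = |x| ^ p' / 2 + |y| ^ p' / 2 := by ring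

/-- Case q = ∞ : the unit ball identity forces v = 0. -/
lemma caseA {N : ℕ} (u v : Fin N → ℝ) {p' : ℝ} (hp1 : 1 < p')
    (hsum1 : ∀ t : ℝ, |t| ≤ 1 → ∑ i, |u i + t * v i| ^ p' = 1) : ∀ i, v i = 0 := by
  intro i
  by_contra hvi
  have h0 : ∑ j, |u j| ^ p' = 1 := by
    have := hsum1 0 (by norm_num)
    simpa using this
  have hplus := hsum1 (1/2) (by rw [abs_of_pos] <;> norm_num)
  have hminus := hsum1 (-(1/2)) (by rw [abs_neg, abs_of_pos] <;> norm_num)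
  have hpt : ∀ j, |u j| ^ p' ≤ |u j + (1/2)*v j| ^ p' / 2 + |u j + (-(1/2))*v j| ^ p' / 2 := by
    intro j
    have h := midpoint_rpow_le hp1 (u j + (1/2)*v j) (u j + (-(1/2))*v j)
    rw [show (u j + (1/2)*v j)/2 + (u j + (-(1/2))*v j)/2 = u j by ring] at h
    exact h
  have hpti : |u i| ^ p' < |u i + (1/2)*v i| ^ p' / 2 + |u i + (-(1/2))*v i| ^ p' / 2 := by
    have h := midpoint_rpow_lt hp1 (x := u i + (1/2)*v i) (y := u i + (-(1/2))*v i)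
      (by intro h; apply hvi; linarith [h])
    rw [show (u i + (1/2)*v i)/2 + (u i + (-(1/2))*v i)/2 = u i by ring] at h
    exact h
  have hlt := Finset.sum_lt_sum (fun j (_ : j ∈ Finset.univ) => hpt j)
    ⟨i, Finset.mem_univ i, hpti⟩
  rw [h0] at hlt
  rw [Finset.sum_add_distrib, ← Finset.sum_div, ← Finset.sum_div, hplus, hminus] at hlt
  norm_num at hlt

lemma sort3 {P : ℝ → Prop} {a b c : ℝ} (hab : a ≠ b) (hac : a ≠ c) (hbc : b ≠ c)
    (ha : P a) (hb : P b) (hc : P c) :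
    ∃ x y z : ℝ, x < y ∧ y < z ∧ P x ∧ P y ∧ P z := by
  rcases lt_trichotomy a b with h1 | h1 | h1
  · rcases lt_trichotomy b c with h2 | h2 | h2
    · exact ⟨a, b, c, h1, h2, ha, hb, hc⟩
    · exact absurd h2 hbc
    · rcases lt_trichotomy a c with h3 | h3 | h3
      · exact ⟨a, c, b, h3, h2, ha, hc, hb⟩
      · exact absurd h3 hac
      · exact ⟨c, a, b, h3, h1, hc, ha, hb⟩
  · exact absurd h1 hab
  · rcases lt_trichotomy a c with h2 | h2 | h2
    · exact ⟨b, a, c, h1, h2, hb, ha, hc⟩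
    · exact absurd h2 hac
    · rcases lt_trichotomy b c with h3 | h3 | h3
      · exact ⟨b, c, a, h3, h2, hb, hc, ha⟩
      · exact absurd h3 hbc
      · exact ⟨c, b, a, h3, h1, hc, hb, ha⟩

lemma hasDerivAt_G {q' t : ℝ} (hq : 0 < q') (ht : 0 < t) :
    HasDerivAt (fun s : ℝ => (1 + s ^ q') ^ (1/q'))
      (t ^ (q'-1) * (1 + t ^ q') ^ (1/q' - 1)) t := by
  have hq0 : q' ≠ 0 := ne_of_gt hq
  have hinner : HasDerivAt (fun s : ℝ => 1 + s ^ q') (q' * t ^ (q'-1)) t :=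
    (Real.hasDerivAt_rpow_const (Or.inl ht.ne')).const_add 1
  have hA : (0:ℝ) < 1 + t ^ q' := by positivity
  have houter := hinner.rpow_const (p := 1/q') (Or.inl hA.ne')
  convert houter using 1
  field_simp

lemma hasDerivAt_G1 {q' t : ℝ} (hq : 1 < q') (ht : 0 < t) :
    HasDerivAt (fun s : ℝ => s ^ (q'-1) * (1 + s ^ q') ^ (1/q' - 1))
      ((q'-1) * t^(q'-2) * (1+t^q')^(1/q'-1)
        + t^(q'-1) * ((q' * t^(q'-1)) * (1/q'-1) * (1+t^q')^(1/q'-2))) t := by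
  have h1 : HasDerivAt (fun s : ℝ => s ^ (q'-1)) ((q'-1) * t ^ (q'-1-1)) t :=
    Real.hasDerivAt_rpow_const (Or.inl ht.ne')
  have hinner : HasDerivAt (fun s : ℝ => 1 + s ^ q') (q' * t ^ (q'-1)) t :=
    (Real.hasDerivAt_rpow_const (Or.inl ht.ne')).const_add 1
  have hA : (0:ℝ) < 1 + t ^ q' := by positivity
  have h2 := hinner.rpow_const (p := 1/q' - 1) (Or.inl hA.ne')
  have h3 := h1.mul h2
  rw [show q' - 1 - 1 = q' - 2 by ring, show 1/q' - 1 - 1 = 1/q' - 2 by ring] at h3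
  exact h3

lemma G2_pos {q' t : ℝ} (hq : 1 < q') (ht : 0 < t) :
    0 < (q'-1) * t^(q'-2) * (1+t^q')^(1/q'-1)
        + t^(q'-1) * ((q' * t^(q'-1)) * (1/q'-1) * (1+t^q')^(1/q'-2)) := by
  have hq0 : q' ≠ 0 := by linarith
  have hA : (0:ℝ) < 1 + t ^ q' := by positivity
  have e1 : (1+t^q') ^ (1/q'-1) = (1+t^q') ^ (1/q'-2) * (1+t^q') := by
    rw [← Real.rpow_add_one hA.ne' (1/q'-2)]
    ring_nf
  have e2 : t^(q'-1) * t^(q'-1) = t^(q'-2) * t^q' := by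
    rw [← Real.rpow_add ht, ← Real.rpow_add ht]; ring_nf
  have hq1 : q' * (1/q'-1) = 1 - q' := by field_simp
  have key : (q'-1) * t^(q'-2) * (1+t^q')^(1/q'-1)
        + t^(q'-1) * ((q' * t^(q'-1)) * (1/q'-1) * (1+t^q')^(1/q'-2))
      = (q'-1) * t^(q'-2) * (1+t^q')^(1/q'-2) := by
    rw [e1]
    calc (q'-1) * t^(q'-2) * ((1+t^q')^(1/q'-2) * (1+t^q'))
          + t^(q'-1) * ((q' * t^(q'-1)) * (1/q'-1) * (1+t^q')^(1/q'-2))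
        = (q'-1) * t^(q'-2) * (1+t^q')^(1/q'-2)
          + (q'-1) * (t^(q'-2) * t^q') * (1+t^q')^(1/q'-2)
          + (q' * (1/q'-1)) * (t^(q'-1) * t^(q'-1)) * (1+t^q')^(1/q'-2) := by ring
      _ = (q'-1) * t^(q'-2) * (1+t^q')^(1/q'-2) := by rw [hq1, e2]; ring
  rw [key]
  have h1 : (0:ℝ) < t^(q'-2) := Real.rpow_pos_of_pos ht _
  have h2 : (0:ℝ) < (1+t^q')^(1/q'-2) := Real.rpow_pos_of_pos hA _
  have h3 : (0:ℝ) < q' - 1 := by linarith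
  positivity

/-- Case p = ∞ : sup-norm identity with strictly convex right side is impossible. -/
lemma caseB {N : ℕ} (hN : 0 < N) (u v : Fin N → ℝ) {q' : ℝ} (hq : 1 < q')
    (hmax : ∀ t : ℝ, (⨆ i, |u i + t * v i|) = (1 + |t| ^ q') ^ (1/q')) : False := by
  classical
  haveI : Nonempty (Fin N) := ⟨⟨0, hN⟩⟩
  set M := 4*N+1 with hM
  set τ : Fin M → ℝ := fun j => ((j.val : ℝ) + 1) / (4*(N:ℝ)+2) with hτ
  have hDpos : (0:ℝ) < 4*(N:ℝ)+2 := by positivity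
  have hτpos : ∀ j, 0 < τ j := fun j => by
    rw [hτ]; exact div_pos (by positivity) hDpos
  have hτlt : ∀ j, τ j < 1 := fun j => by
    rw [hτ]
    simp only []
    rw [div_lt_one hDpos]
    have h2 : (j.val:ℝ) < 4*(N:ℝ)+1 := by exact_mod_cast (j.isLt : j.val < 4*N+1)
    linarith
  have hτinj : ∀ j j' : Fin M, τ j = τ j' → j = j' := by
    intro j j' h
    rw [hτ] at h
    simp only [] at h
    rw [div_eq_div_iff hDpos.ne' hDpos.ne'] at h
    have : (j.val:ℝ) = j'.val := by nlinarith
    exact Fin.ext (by exact_mod_cast this)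
  have hatt : ∀ t : ℝ, ∃ i, |u i + t * v i| = (1 + |t| ^ q') ^ (1/q') := by
    intro t
    obtain ⟨i, hi⟩ := exists_eq_ciSup_of_finite (f := fun i => |u i + t * v i|)
    exact ⟨i, by rw [hi, hmax t]⟩
  choose idx hidx using hatt
  set cls : Fin M → Fin N × Bool :=
    fun j => (idx (τ j), decide (0 ≤ u (idx (τ j)) + τ j * v (idx (τ j)))) with hcls
  have hcard : (Finset.univ : Finset (Fin N × Bool)).card * 2
      < (Finset.univ : Finset (Fin M)).card := by
    simp only [Finset.card_univ, Fintype.card_prod, Fintype.card_bool, Fintype.card_fin]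
    omega
  obtain ⟨y, -, hy⟩ := Finset.exists_lt_card_fiber_of_mul_lt_card_of_maps_to
    (f := cls) (fun a _ => Finset.mem_univ (cls a)) hcard
  obtain ⟨a, haf, b, hbf, c, hcf, hab, hac, hbc⟩ := Finset.two_lt_card.mp hy
  rw [Finset.mem_filter] at haf hbf hcf
  have hPj : ∀ j : Fin M, cls j = y →
      (0 < τ j ∧ (if y.2 then (1:ℝ) else -1) * u y.1 + τ j * ((if y.2 then (1:ℝ) else -1) * v y.1)
        = (1 + (τ j) ^ q') ^ (1/q')) := by
    intro j hj
    refine ⟨hτpos j, ?_⟩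
    have hidxj := hidx (τ j)
    have hfst : idx (τ j) = y.1 := congrArg Prod.fst hj
    have hsnd : decide (0 ≤ u (idx (τ j)) + τ j * v (idx (τ j))) = y.2 := congrArg Prod.snd hj
    rw [hfst] at hidxj hsnd
    rw [abs_of_pos (hτpos j)] at hidxj
    rcases Bool.eq_false_or_eq_true y.2 with hb2 | hb2
    · rw [hb2] at hsnd ⊢
      have hw : 0 ≤ u y.1 + τ j * v y.1 := of_decide_eq_true hsnd
      rw [abs_of_nonneg hw] at hidxj
      simpa using hidxj
    · rw [hb2] at hsnd ⊢
      have hw : u y.1 + τ j * v y.1 < 0 :=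
        lt_of_not_ge (by simpa using of_decide_eq_false hsnd)
      rw [abs_of_neg hw] at hidxj
      simp only [Bool.false_eq_true, if_false]
      rw [← hidxj]; ring
  set s0 : ℝ := if y.2 then (1:ℝ) else -1 with hs0
  obtain ⟨x1, x2, x3, h12, h23, hP1, hP2, hP3⟩ :=
    sort3 (P := fun t => 0 < t ∧ s0 * u y.1 + t * (s0 * v y.1) = (1 + t ^ q') ^ (1/q'))
      (fun h => hab (hτinj a b h)) (fun h => hac (hτinj a c h)) (fun h => hbc (hτinj b c h))
      (hPj a haf.2) (hPj b hbf.2) (hPj c hcf.2)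
  set φ : ℝ → ℝ := fun t => (1 + t ^ q') ^ (1/q') - (s0 * u y.1 + t * (s0 * v y.1)) with hφ
  set φ' : ℝ → ℝ := fun t => t ^ (q'-1) * (1 + t ^ q') ^ (1/q'-1) - s0 * v y.1 with hφ'
  have hder : ∀ t : ℝ, 0 < t → HasDerivAt φ (φ' t) t := by
    intro t ht
    exact (hasDerivAt_G (by linarith) ht).sub
      ((hasDerivAt_mul_const (s0 * v y.1)).const_add (s0 * u y.1))
  have hroll : ∀ x z : ℝ, 0 < x → x < z → φ x = 0 → φ z = 0 → ∃ ξ ∈ Ioo x z, φ' ξ = 0 := by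
    intro x z hx hxz h1 h2
    apply exists_hasDerivAt_eq_zero hxz
    · intro t ht
      exact ((hder t (lt_of_lt_of_le hx ht.1)).continuousAt).continuousWithinAt
    · rw [h1, h2]
    · intro t ht
      exact hder t (lt_trans hx ht.1)
  have hzero : ∀ t : ℝ, 0 < t → s0 * u y.1 + t * (s0 * v y.1) = (1 + t ^ q') ^ (1/q') → φ t = 0 := by
    intro t _ h
    rw [hφ]; simp only []; rw [h]; ring
  obtain ⟨ξ1, hξ1mem, hξ1⟩ := hroll x1 x2 hP1.1 h12
    (hzero _ hP1.1 hP1.2) (hzero _ (lt_trans hP1.1 h12) hP2.2)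
  obtain ⟨ξ2, hξ2mem, hξ2⟩ := hroll x2 x3 (lt_trans hP1.1 h12) h23
    (hzero _ (lt_trans hP1.1 h12) hP2.2) (hzero _ (lt_trans (lt_trans hP1.1 h12) h23) hP3.2)
  have hξ1pos : 0 < ξ1 := lt_trans hP1.1 hξ1mem.1
  have hξ12 : ξ1 < ξ2 := lt_trans hξ1mem.2 hξ2mem.1
  have hder2 : ∀ t : ℝ, 0 < t → HasDerivAt φ'
      ((q'-1) * t^(q'-2) * (1+t^q')^(1/q'-1)
        + t^(q'-1) * ((q' * t^(q'-1)) * (1/q'-1) * (1+t^q')^(1/q'-2))) t := by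
    intro t ht
    exact (hasDerivAt_G1 hq ht).sub_const _
  obtain ⟨η, hηmem, hη⟩ := exists_hasDerivAt_eq_zero hξ12
    (fun t ht => ((hder2 t (lt_of_lt_of_le hξ1pos ht.1)).continuousAt).continuousWithinAt)
    (by rw [hξ1, hξ2])
    (fun t ht => hder2 t (lt_trans hξ1pos ht.1))
  exact absurd hη (ne_of_gt (G2_pos hq (lt_trans hξ1pos hηmem.1)))

/-- Core contradiction for the case where both `p` and `q` are finite. -/
lemma core_finite {N : ℕ} (u v : Fin N → ℝ) {p' q' : ℝ} (hp1 : 1 ≤ p') (hq1 : 1 ≤ q')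
    (hu : ∑ i, |u i| ^ p' = 1) (hv : ∑ i, |v i| ^ p' = 1)
    (hsum : ∀ t : ℝ, ∑ i, |u i + t * v i| ^ p' = (1 + |t| ^ q') ^ (p' / q'))
    (hpq : p' ≠ q')
    (hnotspecial : ¬ (q' = 2 ∧ ∃ k : ℕ, 0 < k ∧ p' = 2 * k)) : False := by
  by_cases hpe : ∃ k : ℕ, 0 < k ∧ p' = 2 * (k:ℝ)
  · obtain ⟨k, hk, hp'k⟩ := hpe
    rcases lt_trichotomy q' 2 with h | h | h
    · exact caseC2a u v hk hp'k hq1 h hu hsum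
    · exact hnotspecial ⟨h, k, hk, hp'k⟩
    · exact absurd (ending_lemma u v (by linarith) (by linarith) hu hv hsum
        (caseC2c_disjoint u v hk hp'k h hu hsum)) hpq
  · have hpe' : ∀ k : ℕ, p' ≠ 2 * k := by
      intro k hk
      rcases Nat.eq_zero_or_pos k with rfl | hkpos
      · simp at hk; linarith
      · exact hpe ⟨k, hkpos, hk⟩
    exact absurd (ending_lemma u v (by linarith) (by linarith) hu hv hsum
      (disjoint_of_not_even u v hp1 (by linarith) hsum hpe')) hpq

end Aux

/-- For `2 ≤ m ≤ n` and `q, p ∈ [1,∞]` with `q ≠ p`, unless `q = 2` and `p` is an even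
positive integer, or both `q ∈ {1,∞}` and `p ∈ {1,∞}`, the space `ℓ_q^m(ℝ)` does not
embed isometrically into `ℓ_p^n(ℝ)`. -/
theorem no_isometric_embedding_lq_lp_real (m n : ℕ) (hm : 2 ≤ m) (hmn : m ≤ n)
    (q p : ℝ≥0∞) (hq : 1 ≤ q) (hp : 1 ≤ p) (hqp : q ≠ p)
    (hnot : ¬ (q = 2 ∧ ∃ k : ℕ, 0 < k ∧ p = (2 * k : ℕ)))
    (hnot' : ¬ ((q = 1 ∨ q = ∞) ∧ (p = 1 ∨ p = ∞))) :
    ¬ ∃ T : (Fin m → ℝ) →ₗ[ℝ] (Fin n → ℝ), ∀ x, lpNormR p (T x) = lpNormR q x := by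
  rintro ⟨T, hT⟩
  obtain ⟨m', rfl⟩ : ∃ m', m = m' + 2 := ⟨m - 2, by omega⟩
  have hn0 : 0 < n := by omega
  set x : ℝ → (Fin (m'+2) → ℝ) := fun t j => if j = 0 then 1 else if j = 1 then t else 0
    with hx
  set e2 : Fin (m'+2) → ℝ := fun j => if j = 1 then 1 else 0 with he2
  have h01 : (0 : Fin (m'+2)) ≠ 1 := by
    intro h
    exact absurd (congrArg Fin.val h) (by simp)
  have hxsplit : ∀ t : ℝ, x t = x 0 + t • e2 := by
    intro t; funext j
    rw [hx, he2]
    simp only [Pi.add_apply, Pi.smul_apply, smul_eq_mul]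
    by_cases h0 : j = 0
    · subst h0; simp [h01]
    · by_cases h1 : j = 1 <;> simp [h0, h1]
  set u : Fin n → ℝ := T (x 0) with hu
  set v : Fin n → ℝ := T e2 with hv
  have hTx : ∀ t : ℝ, ∀ i, T (x t) i = u i + t * v i := by
    intro t i
    rw [hxsplit t, map_add, map_smul, hu, hv]
    simp
  have hdom_sum : ∀ c : ℝ, c ≠ 0 → ∀ t : ℝ, ∑ j, |x t j| ^ c = 1 + |t| ^ c := by
    intro c hc t
    have hterm : ∀ j : Fin (m'+2), |x t j| ^ c =
        (if j = 0 then (1:ℝ) else 0) + (if j = 1 then |t| ^ c else 0) := by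
      intro j
      rw [hx]
      by_cases h0 : j = 0
      · subst h0
        simp [h01, if_neg h01]
      · by_cases h1 : j = 1
        · subst h1; simp [h0]
        · simp [h0, h1, Real.zero_rpow hc]
    rw [Finset.sum_congr rfl fun j _ => hterm j, Finset.sum_add_distrib]
    simp [Finset.sum_ite_eq']
  have hdom_e2 : ∀ c : ℝ, c ≠ 0 → ∑ j, |e2 j| ^ c = 1 := by
    intro c hc
    have hterm : ∀ j : Fin (m'+2), |e2 j| ^ c = (if j = 1 then (1:ℝ) else 0) := by
      intro j; rw [he2]; by_cases h1 : j = 1 <;> simp [h1, Real.zero_rpow hc]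
    rw [Finset.sum_congr rfl fun j _ => hterm j]
    simp
  by_cases hpt : p = ∞
  · by_cases hqt : q = ∞
    · exact hqp (hqt.trans hpt.symm)
    · -- case B : p = ∞, q finite
      have hq1' : q ≠ 1 := fun h => hnot' ⟨Or.inl h, Or.inr hpt⟩
      have hq'1 : 1 < q.toReal := by
        rw [show (1:ℝ) = (1:ℝ≥0∞).toReal by simp]
        exact (ENNReal.toReal_lt_toReal (by simp) hqt).mpr (lt_of_le_of_ne hq (Ne.symm hq1'))
      have hq'0 : q.toReal ≠ 0 := by linarith
      have hmax : ∀ t : ℝ, (⨆ i, |u i + t * v i|) = (1 + |t| ^ q.toReal) ^ (1/q.toReal) := by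
        intro t
        have h := hT (x t)
        rw [lpNormR, lpNormR, if_pos hpt, if_neg hqt] at h
        simp only [hTx t] at h
        rw [h, hdom_sum q.toReal hq'0 t]
      exact caseB hn0 u v hq'1 hmax
  · have hp'0 : p.toReal ≠ 0 := by
      have : (1:ℝ) ≤ p.toReal := by
        rw [show (1:ℝ) = (1:ℝ≥0∞).toReal by simp]
        exact (ENNReal.toReal_le_toReal (by simp) hpt).mpr hp
      linarith
    have hp'1 : (1:ℝ) ≤ p.toReal := by
      rw [show (1:ℝ) = (1:ℝ≥0∞).toReal by simp]
      exact (ENNReal.toReal_le_toReal (by simp) hpt).mpr hp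
    have hraise : ∀ S r : ℝ, 0 ≤ S → S ^ (1/p.toReal) = r → S = r ^ p.toReal := by
      intro S r hS h
      have h2 : S ^ ((1/p.toReal) * p.toReal) = (S ^ (1/p.toReal)) ^ p.toReal :=
        Real.rpow_mul hS _ _
      rw [one_div_mul_cancel hp'0, Real.rpow_one] at h2
      rw [h2, h]
    have hsum_nonneg : ∀ y : Fin n → ℝ, (0:ℝ) ≤ ∑ i, |y i| ^ p.toReal := fun y =>
      Finset.sum_nonneg fun i _ => Real.rpow_nonneg (abs_nonneg _) _
    by_cases hqt : q = ∞
    · -- case A : q = ∞, p finite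
      have hp1' : p ≠ 1 := fun h => hnot' ⟨Or.inr hqt, Or.inl h⟩
      have hp'gt : 1 < p.toReal := by
        rw [show (1:ℝ) = (1:ℝ≥0∞).toReal by simp]
        exact (ENNReal.toReal_lt_toReal (by simp) hpt).mpr (lt_of_le_of_ne hp (Ne.symm hp1'))
      have hsup : ∀ t : ℝ, |t| ≤ 1 → (⨆ j, |x t j|) = 1 := by
        intro t ht
        apply le_antisymm
        · apply ciSup_le
          intro j
          rw [hx]
          by_cases h0 : j = 0
          · subst h0; simp [h01]
          · by_cases h1 : j = 1 <;> simp [h0, h1, ht]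
        · have hb : BddAbove (Set.range fun j => |x t j|) :=
            Set.Finite.bddAbove (Set.finite_range _)
          have := le_ciSup hb (0 : Fin (m'+2))
          rw [hx] at this
          simpa using this
      have hsum1 : ∀ t : ℝ, |t| ≤ 1 → ∑ i, |u i + t * v i| ^ p.toReal = 1 := by
        intro t ht
        have h := hT (x t)
        rw [lpNormR, lpNormR, if_neg hpt, if_pos hqt] at h
        simp only [hTx t] at h
        rw [hsup t ht] at h
        have := hraise _ _ (hsum_nonneg _) h
        rwa [Real.one_rpow] at this
      have hv0 := caseA u v hp'gt hsum1
      -- contradiction with ‖e2‖ = 1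
      have h := hT e2
      rw [lpNormR, lpNormR, if_neg hpt, if_pos hqt] at h
      have hsupe2 : (⨆ j, |e2 j|) = 1 := by
        apply le_antisymm
        · apply ciSup_le
          intro j
          rw [he2]
          by_cases h1 : j = 1 <;> simp [h1]
        · have hb : BddAbove (Set.range fun j => |e2 j|) :=
            Set.Finite.bddAbove (Set.finite_range _)
          have := le_ciSup hb (1 : Fin (m'+2))
          rw [he2] at this
          simpa using this
      rw [hsupe2] at h
      have hzero : ∑ i, |(T e2) i| ^ p.toReal = 0 := by
        apply Finset.sum_eq_zero
        intro i _
        rw [show (T e2) i = v i from rfl, hv0 i]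
        simp [Real.zero_rpow hp'0]
      rw [hzero, Real.zero_rpow (by simp [hp'0] : 1/p.toReal ≠ 0)] at h
      norm_num at h
    · -- case C : both finite
      have hq'1 : (1:ℝ) ≤ q.toReal := by
        rw [show (1:ℝ) = (1:ℝ≥0∞).toReal by simp]
        exact (ENNReal.toReal_le_toReal (by simp) hqt).mpr hq
      have hq'0 : q.toReal ≠ 0 := by linarith
      have hu1 : ∑ i, |u i| ^ p.toReal = 1 := by
        have h := hT (x 0)
        rw [lpNormR, lpNormR, if_neg hpt, if_neg hqt] at h
        rw [hdom_sum q.toReal hq'0 0] at h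
        simp only [abs_zero, Real.zero_rpow hq'0, add_zero, Real.one_rpow] at h
        have h2 := hraise _ _ (hsum_nonneg _) h
        rw [Real.one_rpow] at h2
        exact h2
      have hv1 : ∑ i, |v i| ^ p.toReal = 1 := by
        have h := hT e2
        rw [lpNormR, lpNormR, if_neg hpt, if_neg hqt] at h
        rw [hdom_e2 q.toReal hq'0, Real.one_rpow] at h
        have h2 := hraise _ _ (hsum_nonneg _) h
        rw [Real.one_rpow] at h2
        exact h2
      have hsum : ∀ t : ℝ, ∑ i, |u i + t * v i| ^ p.toReal
          = (1 + |t| ^ q.toReal) ^ (p.toReal / q.toReal) := by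
        intro t
        have h := hT (x t)
        rw [lpNormR, lpNormR, if_neg hpt, if_neg hqt] at h
        simp only [hTx t] at h
        rw [hdom_sum q.toReal hq'0 t] at h
        have h2 := hraise _ _ (hsum_nonneg _) h
        rw [h2, ← Real.rpow_mul (by positivity)]
        rw [show (1/q.toReal) * p.toReal = p.toReal / q.toReal by ring]
      have hpq' : p.toReal ≠ q.toReal := by
        intro h
        exact hqp ((ENNReal.toReal_eq_toReal_iff' hqt hpt).mp h.symm)
      have hnotspecial : ¬ (q.toReal = 2 ∧ ∃ k : ℕ, 0 < k ∧ p.toReal = 2 * k) := by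
        rintro ⟨h2, k, hk, hpk⟩
        apply hnot
        constructor
        · have : q.toReal = ((2:ℝ≥0∞)).toReal := by simpa using h2
          exact (ENNReal.toReal_eq_toReal_iff' hqt (by simp)).mp this
        · refine ⟨k, hk, ?_⟩
          have : p.toReal = (((2*k : ℕ) : ℝ≥0∞)).toReal := by
            rw [ENNReal.toReal_natCast]; push_cast; linarith
          exact (ENNReal.toReal_eq_toReal_iff' hpt (ENNReal.natCast_ne_top (2*k))).mp this
      exact core_finite u v hp'1 hq'1 hu1 hv1 hsum hpq' hnotspecial
end

section
/- Let m, n be integers with 2 ≤ m ≤ n, let q ∈ (0,∞) be a real number that is not an even positive integer, and let p ∈ (0,1) with q ≠ p. Then there is no linear map T : ℂ^m → ℂ^n such that (Σ_{j=1}^n |(Tx)_j|^p)^{1/p} = (Σ_{i=1}^m |x_i|^q)^{1/q} for all x ∈ ℂ^m; that is, ℓ_q^m(ℂ) does not embed isometrically into ℓ_p^n(ℂ). -/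
open Filter Topology Asymptotics

lemma coeff_limit {f : ℝ → ℝ} {P : FormalMultilinearSeries ℝ ℝ ℝ}
    (hP : HasFPowerSeriesAt f P 0) (n : ℕ) :
    Tendsto (fun t => (f t - P.partialSum n t) / t ^ n) (𝓝[≠] (0:ℝ)) (𝓝 (P.coeff n)) := by
  have h := hP.isBigO_sub_partialSum_pow (n+1)
  simp only [zero_add] at h
  obtain ⟨C, hC⟩ := h.bound
  have key : Tendsto (fun t => (f t - P.partialSum (n+1) t) / t ^ n) (𝓝[≠] (0:ℝ)) (𝓝 0) := by
    apply squeeze_zero_norm' (a := fun t => C * |t|)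
    · filter_upwards [nhdsWithin_le_nhds hC, self_mem_nhdsWithin] with t ht ht0
      have ht0' : (0:ℝ) < |t| := abs_pos.mpr ht0
      have hpos : (0:ℝ) < ‖t ^ n‖ := by
        rw [norm_pos_iff]; exact pow_ne_zero _ ht0
      rw [norm_div, div_le_iff₀ hpos]
      calc ‖f t - P.partialSum (n+1) t‖ ≤ C * ‖‖t‖ ^ (n+1)‖ := ht
        _ = C * |t| * ‖t ^ n‖ := by
            simp [Real.norm_eq_abs, abs_pow, abs_abs, pow_succ]
            ring
    · have : Tendsto (fun t : ℝ => C * |t|) (𝓝 0) (𝓝 (C * |(0:ℝ)|)) :=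
        (continuous_const.mul (continuous_abs)).tendsto 0
      simpa using this.mono_left nhdsWithin_le_nhds
  have hps : ∀ t : ℝ, P.partialSum (n+1) t = P.partialSum n t + t ^ n * P.coeff n := by
    intro t
    simp [FormalMultilinearSeries.partialSum, Finset.sum_range_succ,
      FormalMultilinearSeries.apply_eq_pow_smul_coeff, smul_eq_mul]
  have : ∀ᶠ t in 𝓝[≠] (0:ℝ),
      (f t - P.partialSum (n+1) t) / t ^ n + P.coeff n = (f t - P.partialSum n t) / t ^ n := by
    filter_upwards [self_mem_nhdsWithin] with t ht0
    have htn : (t:ℝ) ^ n ≠ 0 := pow_ne_zero _ ht0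
    rw [hps t, div_add' _ _ _ htn]
    ring
  have := (key.add tendsto_const_nhds).congr' this
  simpa using this

lemma deriv_limit (s : ℝ) :
    Tendsto (fun u : ℝ => ((1+u) ^ s - 1) / u) (𝓝[≠] (0:ℝ)) (𝓝 s) := by
  have h1 : HasDerivAt (fun x : ℝ => x ^ s) (s * (1:ℝ) ^ (s - 1)) 1 :=
    Real.hasDerivAt_rpow_const (Or.inl one_ne_zero)
  have h2 : HasDerivAt (fun u : ℝ => (1+u) ^ s) s 0 := by
    have h0 : HasDerivAt (fun u : ℝ => 1 + u) 1 0 := (hasDerivAt_id 0).const_add 1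
    have := (Real.hasDerivAt_rpow_const (p := s) (x := (1:ℝ) + 0) (by norm_num)).comp 0 h0
    simpa [Function.comp_def] using this
  have h3 := hasDerivAt_iff_tendsto_slope.mp h2
  apply h3.congr'
  filter_upwards [self_mem_nhdsWithin] with t ht
  simp [slope_def_field, Real.one_rpow]

lemma rpow_tendsto {e : ℝ} (he : 0 < e) :
    Tendsto (fun t : ℝ => t ^ e) (𝓝[>] (0:ℝ)) (𝓝 0) := by
  have := (Real.continuousAt_rpow_const 0 e (Or.inr he.le)).tendsto
  rw [Real.zero_rpow he.ne'] at this
  exact this.mono_left nhdsWithin_le_nhds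

lemma rpow_tendsto_within {e : ℝ} (he : 0 < e) :
    Tendsto (fun t : ℝ => t ^ e) (𝓝[>] (0:ℝ)) (𝓝[≠] 0) := by
  apply tendsto_nhdsWithin_of_tendsto_nhds_of_eventually_within _ (rpow_tendsto he)
  filter_upwards [self_mem_nhdsWithin] with t ht
  exact (Real.rpow_pos_of_pos ht e).ne'

lemma neg_tendsto : Tendsto (fun t : ℝ => -t) (𝓝[<] (0:ℝ)) (𝓝[>] 0) := by
  apply tendsto_nhdsWithin_of_tendsto_nhds_of_eventually_within
  · simpa using (continuous_neg.tendsto (0:ℝ)).mono_left nhdsWithin_le_nhds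
  · filter_upwards [self_mem_nhdsWithin] with t ht
    simpa using ht

theorem key (p q c : ℝ) (hp0 : 0 < p) (hp1 : p < 1) (hq : 0 < q)
    (hqe : ¬ ∃ k : ℕ, 0 < k ∧ q = 2 * k) (hqp : q ≠ p) (hc : 0 ≤ c)
    (α : ℝ → ℝ) (hα : AnalyticAt ℝ α 0)
    (heq : ∀ t : ℝ, α t = (1 + |t| ^ q) ^ (p/q) - c * |t| ^ p) : False := by
  obtain ⟨P, hP⟩ := hα
  have hα0 : α 0 = 1 := by
    simp [heq, Real.zero_rpow hq.ne', Real.zero_rpow hp0.ne']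
  have hcoeff0 : P.coeff 0 = 1 := by
    have : P.coeff 0 = α 0 := hP.coeff_zero (fun _ => (1:ℝ))
    rw [this, hα0]
  -- the basic right limit
  have hGq : Tendsto (fun t : ℝ => ((1 + t ^ q) ^ (p/q) - 1) / t ^ q)
      (𝓝[>] (0:ℝ)) (𝓝 (p/q)) := (deriv_limit (p/q)).comp (rpow_tendsto_within hq)
  have hpq_pos : 0 < p / q := div_pos hp0 hq
  -- coefficients below q vanish when c = 0
  have hcoeff : c = 0 → ∀ n : ℕ, 1 ≤ n → (n : ℝ) < q → P.coeff n = 0 := by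
    intro hc0
    intro n
    induction n using Nat.strong_induction_on with
    | _ n IH =>
      intro hn1 hnq
      have hpsum : ∀ t : ℝ, P.partialSum n t = 1 := by
        intro t
        rw [FormalMultilinearSeries.partialSum]
        rw [Finset.sum_eq_single_of_mem 0 (Finset.mem_range.mpr hn1)]
        · simp [FormalMultilinearSeries.apply_eq_pow_smul_coeff, hcoeff0]
        · intro k hk hk0
          have hk1 : 1 ≤ k := Nat.one_le_iff_ne_zero.mpr hk0
          have hkn : k < n := Finset.mem_range.mp hk
          have hkq : (k : ℝ) < q := lt_trans (by exact_mod_cast hkn) hnq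
          simp [FormalMultilinearSeries.apply_eq_pow_smul_coeff, IH k hkn hk1 hkq]
      have L1 : Tendsto (fun t => (α t - 1) / t ^ n) (𝓝[>] (0:ℝ)) (𝓝 (P.coeff n)) := by
        have := (coeff_limit hP n).mono_left
          (nhdsWithin_mono 0 (fun t ht => ne_of_gt ht : Set.Ioi (0:ℝ) ⊆ {0}ᶜ))
        exact this.congr (fun t => by rw [hpsum t])
      have L2 : Tendsto (fun t => (α t - 1) / t ^ n) (𝓝[>] (0:ℝ)) (𝓝 0) := by
        have hmul : Tendsto (fun t : ℝ => (((1 + t ^ q) ^ (p/q) - 1) / t ^ q) * t ^ (q - (n:ℝ)))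
            (𝓝[>] (0:ℝ)) (𝓝 ((p/q) * 0)) := hGq.mul (rpow_tendsto (by linarith))
        rw [mul_zero] at hmul
        apply hmul.congr'
        filter_upwards [self_mem_nhdsWithin] with t ht
        have ht : (0:ℝ) < t := ht
        have htq : (0:ℝ) < t ^ q := Real.rpow_pos_of_pos ht q
        have htn : (0:ℝ) < t ^ (n:ℝ) := Real.rpow_pos_of_pos ht (n:ℝ)
        rw [heq t, abs_of_pos ht, hc0, zero_mul, sub_zero, Real.rpow_sub ht,
          ← Real.rpow_natCast t n]
        field_simp
      exact tendsto_nhds_unique L1 L2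
  have hsub1 : (Set.Ioi (0:ℝ)) ⊆ {(0:ℝ)}ᶜ := fun t ht => ne_of_gt ht
  have hsub2 : (Set.Iio (0:ℝ)) ⊆ {(0:ℝ)}ᶜ := fun t ht => ne_of_lt ht
  -- Case B : q not a natural number, and (c = 0 or q < p)
  have caseB : (c = 0 ∨ q < p) → (∀ k : ℕ, q ≠ (k:ℝ)) → False := by
    intro hcase hqnotnat
    set N := ⌈q⌉₊ with hNdef
    have hN1 : 0 < N := Nat.ceil_pos.mpr hq
    have hqN : q < N := lt_of_le_of_ne (Nat.le_ceil q) (fun h => hqnotnat N h)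
    have hNq1 : (N:ℝ) < q + 1 := Nat.ceil_lt_add_one hq.le
    have hpsum : ∀ t : ℝ, P.partialSum N t = 1 := by
      intro t
      rw [FormalMultilinearSeries.partialSum]
      rw [Finset.sum_eq_single_of_mem 0 (Finset.mem_range.mpr hN1)]
      · simp [FormalMultilinearSeries.apply_eq_pow_smul_coeff, hcoeff0]
      · intro k hk hk0
        have hk1 : 1 ≤ k := Nat.one_le_iff_ne_zero.mpr hk0
        have hkn : k < N := Finset.mem_range.mp hk
        have hkq : (k:ℝ) < q := by
          have h1 : ((k:ℝ)) + 1 ≤ N := by exact_mod_cast hkn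
          linarith
        have hck : P.coeff k = 0 := by
          rcases hcase with h | h
          · exact hcoeff h k hk1 hkq
          · exfalso
            have : (1:ℝ) ≤ (k:ℝ) := by exact_mod_cast hk1
            linarith
        simp [FormalMultilinearSeries.apply_eq_pow_smul_coeff, hck]
    have L1 : Tendsto (fun t => (α t - 1) / t ^ N) (𝓝[>] (0:ℝ)) (𝓝 (P.coeff N)) := by
      have := (coeff_limit hP N).mono_left (nhdsWithin_mono 0 hsub1)
      exact this.congr (fun t => by rw [hpsum t])
    have h2 : Tendsto (fun t => (α t - 1) / t ^ q) (𝓝[>] (0:ℝ)) (𝓝 0) := by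
      have hmul := L1.mul (rpow_tendsto (e := (N:ℝ) - q) (by linarith))
      rw [mul_zero] at hmul
      apply hmul.congr'
      filter_upwards [self_mem_nhdsWithin] with t ht
      have ht : (0:ℝ) < t := ht
      have htq : (0:ℝ) < t ^ q := Real.rpow_pos_of_pos ht q
      have htN : (0:ℝ) < t ^ ((N:ℕ):ℝ) := Real.rpow_pos_of_pos ht _
      rw [Real.rpow_sub ht, ← Real.rpow_natCast t N]
      field_simp
    have hcterm : Tendsto (fun t : ℝ => c * t ^ (p - q)) (𝓝[>] (0:ℝ)) (𝓝 0) := by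
      rcases hcase with h | h
      · simp only [h, zero_mul]
        exact tendsto_const_nhds
      · have := (rpow_tendsto (e := p - q) (by linarith)).const_mul c
        simpa using this
    have h1 : Tendsto (fun t => (α t - 1) / t ^ q) (𝓝[>] (0:ℝ)) (𝓝 (p/q)) := by
      have hmul := hGq.sub hcterm
      rw [sub_zero] at hmul
      apply hmul.congr'
      filter_upwards [self_mem_nhdsWithin] with t ht
      have ht : (0:ℝ) < t := ht
      have htq : (0:ℝ) < t ^ q := Real.rpow_pos_of_pos ht q
      have htp : (0:ℝ) < t ^ p := Real.rpow_pos_of_pos ht p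
      rw [heq t, abs_of_pos ht, Real.rpow_sub ht]
      field_simp
      ring
    have := tendsto_nhds_unique h1 h2
    linarith
  by_cases hc0 : c = 0
  · by_cases hqnat : ∃ M : ℕ, q = M
    · -- case C : q an odd positive integer
      obtain ⟨M, hM⟩ := hqnat
      have hM1 : 1 ≤ M := by
        by_contra h
        interval_cases M
        · simp [hM] at hq
      have hModd : Odd M := by
        rcases Nat.even_or_odd M with he | ho
        · obtain ⟨k, hk⟩ := he
          exact absurd ⟨k, by omega, by rw [hM, hk]; push_cast; ring⟩ hqe
        · exact ho
      have hpsum : ∀ t : ℝ, P.partialSum M t = 1 := by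
        intro t
        rw [FormalMultilinearSeries.partialSum]
        rw [Finset.sum_eq_single_of_mem 0 (Finset.mem_range.mpr hM1)]
        · simp [FormalMultilinearSeries.apply_eq_pow_smul_coeff, hcoeff0]
        · intro k hk hk0
          have hk1 : 1 ≤ k := Nat.one_le_iff_ne_zero.mpr hk0
          have hkn : k < M := Finset.mem_range.mp hk
          have hkq : (k:ℝ) < q := by rw [hM]; exact_mod_cast hkn
          simp [FormalMultilinearSeries.apply_eq_pow_smul_coeff, hcoeff hc0 k hk1 hkq]
      have L1 : Tendsto (fun t => (α t - 1) / t ^ M) (𝓝[≠] (0:ℝ)) (𝓝 (P.coeff M)) :=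
        (coeff_limit hP M).congr (fun t => by rw [hpsum t])
      have hR : Tendsto (fun s : ℝ => ((1 + s ^ q) ^ (p/q) - 1) / s ^ M)
          (𝓝[>] (0:ℝ)) (𝓝 (p/q)) := by
        apply hGq.congr'
        filter_upwards [self_mem_nhdsWithin] with t ht
        have ht : (0:ℝ) < t := ht
        rw [← Real.rpow_natCast t M, ← hM]
      have h1 : Tendsto (fun t => (α t - 1) / t ^ M) (𝓝[>] (0:ℝ)) (𝓝 (p/q)) := by
        apply hR.congr'
        filter_upwards [self_mem_nhdsWithin] with t ht
        have ht : (0:ℝ) < t := ht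
        rw [heq t, abs_of_pos ht, hc0, zero_mul, sub_zero]
      have h2 : Tendsto (fun t => (α t - 1) / t ^ M) (𝓝[<] (0:ℝ)) (𝓝 (-(p/q))) := by
        have := (hR.comp neg_tendsto).neg
        apply this.congr'
        filter_upwards [self_mem_nhdsWithin] with t ht
        have ht : t < 0 := ht
        simp only [Function.comp]
        rw [heq t, abs_of_neg ht, hc0, zero_mul, sub_zero, hModd.neg_pow, div_neg, neg_neg]
      have e1 := tendsto_nhds_unique (L1.mono_left (nhdsWithin_mono 0 hsub1)) h1
      have e2 := tendsto_nhds_unique (L1.mono_left (nhdsWithin_mono 0 hsub2)) h2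
      rw [e1] at e2
      linarith
    · -- case B with c = 0
      exact caseB (Or.inl hc0) (fun k hk => hqnat ⟨k, hk⟩)
  · rcases lt_or_gt_of_ne hqp with hlt | hgt
    · -- q < p : case B
      apply caseB (Or.inr hlt)
      intro k hk
      have hk1 : 1 ≤ k := by
        rcases Nat.eq_zero_or_pos k with h | h
        · rw [h] at hk; simp at hk; linarith
        · exact h
      have : (1:ℝ) ≤ (k:ℝ) := by exact_mod_cast hk1
      linarith
    · -- p < q, c ≠ 0 : case A
      have hpsum1 : ∀ t : ℝ, P.partialSum 1 t = 1 := by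
        intro t
        simp [FormalMultilinearSeries.partialSum, Finset.sum_range_one,
          FormalMultilinearSeries.apply_eq_pow_smul_coeff, hcoeff0]
      have L1 : Tendsto (fun t => (α t - 1) / t ^ (1:ℕ)) (𝓝[>] (0:ℝ)) (𝓝 (P.coeff 1)) := by
        have := (coeff_limit hP 1).mono_left (nhdsWithin_mono 0 hsub1)
        exact this.congr (fun t => by rw [hpsum1 t])
      have h2 : Tendsto (fun t => (α t - 1) / t ^ p) (𝓝[>] (0:ℝ)) (𝓝 0) := by
        have hmul := L1.mul (rpow_tendsto (e := 1 - p) (by linarith))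
        rw [mul_zero] at hmul
        apply hmul.congr'
        filter_upwards [self_mem_nhdsWithin] with t ht
        have ht : (0:ℝ) < t := ht
        have htp : (0:ℝ) < t ^ p := Real.rpow_pos_of_pos ht p
        rw [Real.rpow_sub ht, pow_one, Real.rpow_one]
        field_simp
      have h1 : Tendsto (fun t => (α t - 1) / t ^ p) (𝓝[>] (0:ℝ)) (𝓝 (-c)) := by
        have hmul : Tendsto (fun t : ℝ => (((1 + t ^ q) ^ (p/q) - 1) / t ^ q) * t ^ (q - p) - c)
            (𝓝[>] (0:ℝ)) (𝓝 ((p/q) * 0 - c)) :=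
          (hGq.mul (rpow_tendsto (by linarith))).sub tendsto_const_nhds
        rw [mul_zero, zero_sub] at hmul
        apply hmul.congr'
        filter_upwards [self_mem_nhdsWithin] with t ht
        have ht : (0:ℝ) < t := ht
        have htq : (0:ℝ) < t ^ q := Real.rpow_pos_of_pos ht q
        have htp : (0:ℝ) < t ^ p := Real.rpow_pos_of_pos ht p
        rw [heq t, abs_of_pos ht, Real.rpow_sub ht]
        field_simp
        ring
      have := tendsto_nhds_unique h1 h2
      exact hc0 (by linarith)

/-- For `2 ≤ m ≤ n`, `q ∈ (0,∞)` not an even positive integer, and `p ∈ (0,1)` with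
`q ≠ p`, the space `ℓ_q^m(ℂ)` does not embed isometrically into `ℓ_p^n(ℂ)`: there is no
linear `T : ℂ^m → ℂ^n` with `(Σ_j |(Tx)_j|^p)^{1/p} = (Σ_i |x_i|^q)^{1/q}` for all `x`. -/
theorem no_isometric_embedding_lq_lp_quasi_complex (m n : ℕ) (hm : 2 ≤ m) (hmn : m ≤ n)
    (q p : ℝ) (hq : 0 < q) (hqe : ¬ ∃ k : ℕ, 0 < k ∧ q = 2 * k)
    (hp0 : 0 < p) (hp1 : p < 1) (hqp : q ≠ p) :
    ¬ ∃ T : (Fin m → ℂ) →ₗ[ℂ] (Fin n → ℂ),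
      ∀ x : Fin m → ℂ,
        (∑ j, ‖T x j‖ ^ p) ^ (1 / p) = (∑ i, ‖x i‖ ^ q) ^ (1 / q) := by
  rintro ⟨T, hT⟩
  set i0 : Fin m := ⟨0, by omega⟩ with hi0
  set i1 : Fin m := ⟨1, by omega⟩ with hi1
  have hne : i0 ≠ i1 := by simp [hi0, hi1, Fin.ext_iff]
  set a : Fin n → ℂ := T (Pi.single i0 1) with ha
  set b : Fin n → ℂ := T (Pi.single i1 1) with hb
  have main : ∀ t : ℝ, ∑ j, ‖a j + (t:ℂ) * b j‖ ^ p = (1 + |t| ^ q) ^ (p/q) := by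
    intro t
    set xx : Fin m → ℂ := (Pi.single i0 (1:ℂ) : Fin m → ℂ) + (t:ℂ) • (Pi.single i1 (1:ℂ) : Fin m → ℂ) with hxx
    have hx := hT xx
    have hTx : ∀ j, T xx j = a j + (t:ℂ) * b j := by
      intro j
      rw [hxx, map_add, map_smul]
      simp [ha, hb]
    have hrhs : ∑ i, ‖xx i‖ ^ q
        = 1 + |t| ^ q := by
      have hxv : ∀ i, xx i = (if i = i0 then 1 else 0) + (t:ℂ) * (if i = i1 then 1 else 0) := by
        intro i
        simp [hxx, Pi.single_apply]
      rw [← Finset.sum_subset (Finset.subset_univ ({i0, i1} : Finset (Fin m)))]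
      · rw [Finset.sum_pair hne]
        rw [hxv i0, hxv i1]
        simp [hne, hne.symm, Complex.norm_real, Real.norm_eq_abs, Real.one_rpow]
      · intro i hiu hi
        simp only [Finset.mem_insert, Finset.mem_singleton, not_or] at hi
        rw [hxv i]
        simp [hi.1, hi.2, Real.zero_rpow hq.ne']
    have hx' : (∑ j, ‖a j + (t:ℂ) * b j‖ ^ p) ^ (1/p) = (1 + |t| ^ q) ^ (1/q) := by
      rw [← hrhs, ← hx]
      congr 1
      exact Finset.sum_congr rfl fun j _ => by rw [hTx j]
    have hS0 : 0 ≤ ∑ j, ‖a j + (t:ℂ) * b j‖ ^ p :=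
      Finset.sum_nonneg fun j _ => Real.rpow_nonneg (norm_nonneg _) _
    have h1q : (0:ℝ) ≤ 1 + |t| ^ q := by positivity
    calc ∑ j, ‖a j + (t:ℂ) * b j‖ ^ p
        = (∑ j, ‖a j + (t:ℂ) * b j‖ ^ p) ^ ((1/p) * p) := by
          rw [one_div_mul_cancel hp0.ne', Real.rpow_one]
      _ = ((∑ j, ‖a j + (t:ℂ) * b j‖ ^ p) ^ (1/p)) ^ p := Real.rpow_mul hS0 _ _
      _ = ((1 + |t| ^ q) ^ (1/q)) ^ p := by rw [hx']
      _ = (1 + |t| ^ q) ^ ((1/q) * p) := (Real.rpow_mul h1q _ _).symm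
      _ = (1 + |t| ^ q) ^ (p/q) := by congr 1; ring
  classical
  set s1 : Finset (Fin n) := Finset.univ.filter (fun j => a j = 0) with hs1
  set s2 : Finset (Fin n) := Finset.univ.filter (fun j => ¬ (a j = 0)) with hs2
  set c : ℝ := ∑ j ∈ s1, ‖b j‖ ^ p with hcdef
  set α : ℝ → ℝ := fun t => ∑ j ∈ s2,
    (((a j).re + t * (b j).re)^2 + ((a j).im + t * (b j).im)^2) ^ (p/2) with hαdef
  have habs : ∀ (z : ℂ), ‖z‖ ^ p = (z.re^2 + z.im^2) ^ (p/2) := by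
    intro z
    rw [Complex.norm_def, Real.sqrt_eq_rpow, ← Real.rpow_mul (Complex.normSq_nonneg z)]
    congr 1
    · rw [Complex.normSq_apply]; ring
    · ring
  have hsplit : ∀ t : ℝ, α t = (1 + |t| ^ q) ^ (p/q) - c * |t| ^ p := by
    intro t
    have h0 := main t
    rw [← Finset.sum_filter_add_sum_filter_not Finset.univ (fun j => a j = 0)] at h0
    have e1 : ∑ j ∈ s1, ‖a j + (t:ℂ) * b j‖ ^ p = c * |t| ^ p := by
      rw [hcdef, Finset.sum_mul]
      apply Finset.sum_congr rfl
      intro j hj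
      have haj : a j = 0 := (Finset.mem_filter.mp hj).2
      rw [haj, zero_add, norm_mul, Complex.norm_real, Real.norm_eq_abs,
        Real.mul_rpow (abs_nonneg t) (norm_nonneg _), mul_comm]
    have e2 : ∑ j ∈ s2, ‖a j + (t:ℂ) * b j‖ ^ p = α t := by
      apply Finset.sum_congr rfl
      intro j hj
      rw [habs]
      have hre : (a j + (t:ℂ) * b j).re = (a j).re + t * (b j).re := by
        simp [Complex.add_re, Complex.mul_re]
      have him : (a j + (t:ℂ) * b j).im = (a j).im + t * (b j).im := by
        simp [Complex.add_im, Complex.mul_im]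
      rw [hre, him]
    rw [e1, e2] at h0
    linarith
  have hc0 : 0 ≤ c := Finset.sum_nonneg fun j _ => Real.rpow_nonneg (norm_nonneg _) _
  have hanal : AnalyticAt ℝ α 0 := by
    rw [hαdef]
    apply Finset.analyticAt_fun_sum
    intro j hj
    have haj : a j ≠ 0 := (Finset.mem_filter.mp hj).2
    set Qf : ℝ → ℝ := fun t => ((a j).re + t * (b j).re)^2 + ((a j).im + t * (b j).im)^2
      with hQf
    have hQ : AnalyticAt ℝ Qf 0 :=
      ((analyticAt_const.add (analyticAt_id.mul analyticAt_const)).pow 2).add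
        ((analyticAt_const.add (analyticAt_id.mul analyticAt_const)).pow 2)
    have hpos : 0 < Qf 0 := by
      have h := Complex.normSq_pos.mpr haj
      rw [Complex.normSq_apply] at h
      simp only [hQf, zero_mul, add_zero]
      nlinarith [h]
    have h1 : AnalyticAt ℝ (fun t : ℝ => ((Qf t : ℝ) : ℂ)) 0 :=
      (Complex.ofRealCLM.analyticAt (Qf 0)).comp hQ
    have h2 : AnalyticAt ℂ (fun z : ℂ => z ^ (((p/2 : ℝ)) : ℂ)) ((Qf 0 : ℝ) : ℂ) := by
      apply AnalyticAt.cpow analyticAt_id analyticAt_const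
      simp only [id_eq]
      rw [Complex.ofReal_mem_slitPlane]
      exact hpos
    have h3 : AnalyticAt ℝ (fun t : ℝ => ((Qf t : ℝ) : ℂ) ^ (((p/2:ℝ)):ℂ)) 0 :=
      AnalyticAt.comp (g := fun z : ℂ => z ^ (((p/2:ℝ)):ℂ))
        (f := fun t : ℝ => ((Qf t : ℝ) : ℂ)) (x := 0) h2.restrictScalars h1
    have h4 : AnalyticAt ℝ (fun t : ℝ => (((Qf t : ℝ) : ℂ) ^ (((p/2:ℝ)):ℂ)).re) 0 :=
      AnalyticAt.comp (g := fun z : ℂ => z.re)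
        (f := fun t : ℝ => ((Qf t : ℝ) : ℂ) ^ (((p/2:ℝ)):ℂ)) (x := 0)
        (Complex.reCLM.analyticAt _) h3
    apply h4.congr
    apply Filter.Eventually.of_forall
    intro t
    have hQt : (0:ℝ) ≤ Qf t := by simp only [hQf]; positivity
    show (((Qf t : ℝ) : ℂ) ^ (((p/2:ℝ)):ℂ)).re = Qf t ^ (p/2)
    rw [← Complex.ofReal_cpow hQt, Complex.ofReal_re]
  exact key p q c hp0 hp1 hq hqe hqp hc0 α hanal hsplit
end

section
/- Let m, n be integers with 2 ≤ m ≤ n, let q ∈ (0,∞), and let p ∈ (0,1) with q ≠ p. Then there is no linear map T : ℝ^m → ℝ^n such that (Σ_{j=1}^n |(Tx)_j|^p)^{1/p} = (Σ_{i=1}^m |x_i|^q)^{1/q} for all x ∈ ℝ^m; that is, ℓ_q^m(ℝ) does not embed isometrically into ℓ_p^n(ℝ). -/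
open Filter Real Topology

/-- A positive multiple of `|t - t₀| ^ p`, `0 < p < 1`, is not differentiable at `t₀`. -/
lemma aux_not_diff_spike (C t₀ p : ℝ) (hC : 0 < C) (hp0 : 0 < p) (hp1 : p < 1) :
    ¬ DifferentiableAt ℝ (fun t : ℝ => C * |t - t₀| ^ p) t₀ := by
  intro h
  have hd := h.hasDerivAt
  rw [hasDerivAt_iff_tendsto_slope] at hd
  have h1 : Tendsto (slope (fun t : ℝ => C * |t - t₀| ^ p) t₀) (𝓝[>] t₀)
      (𝓝 (deriv (fun t : ℝ => C * |t - t₀| ^ p) t₀)) :=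
    hd.mono_left (nhdsWithin_mono _ (fun y hy => ne_of_gt hy))
  have h2 : Tendsto (slope (fun t : ℝ => C * |t - t₀| ^ p) t₀) (𝓝[>] t₀) atTop := by
    have t1 : Tendsto (fun y : ℝ => y - t₀) (𝓝[>] t₀) (𝓝[>] 0) := by
      apply tendsto_nhdsWithin_of_tendsto_nhds_of_eventually_within
      · have := ((continuous_sub_right t₀).tendsto t₀).mono_left (nhdsWithin_le_nhds (s := Set.Ioi t₀))
        simpa using this
      · filter_upwards [self_mem_nhdsWithin] with y hy
        exact sub_pos.mpr (Set.mem_Ioi.mp hy)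
    have t2 : Tendsto (fun x : ℝ => x ^ (1 - p)) (𝓝[>] (0:ℝ)) (𝓝[>] (0:ℝ)) := by
      apply tendsto_nhdsWithin_of_tendsto_nhds_of_eventually_within
      · have hc : ContinuousAt (fun x : ℝ => x ^ (1 - p)) 0 :=
          Real.continuousAt_rpow_const 0 (1 - p) (Or.inr (by linarith))
        have := hc.tendsto.mono_left (nhdsWithin_le_nhds (s := Set.Ioi (0:ℝ)))
        simpa [Real.zero_rpow (by linarith : (1:ℝ) - p ≠ 0)] using this
      · filter_upwards [self_mem_nhdsWithin] with x hx
        exact Real.rpow_pos_of_pos hx _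
    have t3 : Tendsto (fun y : ℝ => ((y - t₀) ^ (1 - p))⁻¹) (𝓝[>] t₀) atTop :=
      tendsto_inv_nhdsGT_zero.comp (t2.comp t1)
    have t4 : Tendsto (fun y : ℝ => C * ((y - t₀) ^ (1 - p))⁻¹) (𝓝[>] t₀) atTop :=
      t3.const_mul_atTop hC
    apply t4.congr'
    filter_upwards [self_mem_nhdsWithin] with y hy
    have hy' : 0 < y - t₀ := sub_pos.mpr hy
    have : slope (fun t : ℝ => C * |t - t₀| ^ p) t₀ y
        = (C * |y - t₀| ^ p - C * |t₀ - t₀| ^ p) / (y - t₀) := by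
      rw [slope_def_field]
    rw [this]
    rw [sub_self, abs_zero, Real.zero_rpow (ne_of_gt hp0), mul_zero, sub_zero,
      abs_of_pos hy']
    rw [mul_div_assoc, ← Real.rpow_sub_one (ne_of_gt hy')]
    congr 1
    rw [show p - 1 = -(1 - p) by ring, Real.rpow_neg (le_of_lt hy')]
  exact not_tendsto_atTop_of_tendsto_nhds h1 h2

/-- For `2 ≤ m ≤ n`, `q ∈ (0,∞)`, and `p ∈ (0,1)` with `q ≠ p`, the space `ℓ_q^m(ℝ)`
does not embed isometrically into `ℓ_p^n(ℝ)`: there is no linear `T : ℝ^m → ℝ^n` with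
`(Σ_j |(Tx)_j|^p)^{1/p} = (Σ_i |x_i|^q)^{1/q}` for all `x`. -/
theorem no_isometric_embedding_lq_lp_quasi_real (m n : ℕ) (hm : 2 ≤ m) (hmn : m ≤ n)
    (q p : ℝ) (hq : 0 < q) (hp0 : 0 < p) (hp1 : p < 1) (hqp : q ≠ p) :
    ¬ ∃ T : (Fin m → ℝ) →ₗ[ℝ] (Fin n → ℝ),
      ∀ x : Fin m → ℝ,
        (∑ j, |T x j| ^ p) ^ (1 / p) = (∑ i, |x i| ^ q) ^ (1 / q) := by
  rintro ⟨T, hT⟩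
  have hpne : p ≠ 0 := ne_of_gt hp0
  have hqne : q ≠ 0 := ne_of_gt hq
  set i0 : Fin m := ⟨0, by omega⟩ with hi0
  set i1 : Fin m := ⟨1, by omega⟩ with hi1
  have hi : i0 ≠ i1 := by simp [hi0, hi1, Fin.ext_iff]
  set e0 : Fin m → ℝ := Pi.single i0 1 with he0
  set e1 : Fin m → ℝ := Pi.single i1 1 with he1
  set a : Fin n → ℝ := T e0 with ha
  set b : Fin n → ℝ := T e1 with hb
  have hsum : ∀ t : ℝ, ∑ i, |e0 i + t * e1 i| ^ q
      = 1 + |t| ^ q := by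
    intro t
    have key : ∀ i : Fin m, |e0 i + t * e1 i| ^ q
        = (if i = i0 then 1 else 0) + (if i = i1 then |t| ^ q else 0) := by
      intro i
      by_cases h0 : i = i0
      · subst h0
        rw [he0, he1, Pi.single_eq_same, Pi.single_eq_of_ne hi]
        simp [hi]
      · by_cases h1 : i = i1
        · subst h1
          rw [he0, he1, Pi.single_eq_same, Pi.single_eq_of_ne (Ne.symm hi)]
          simp [Ne.symm hi, h0]
        · rw [he0, he1, Pi.single_eq_of_ne h0, Pi.single_eq_of_ne h1]
          simp [h0, h1, Real.zero_rpow hqne]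
    rw [Finset.sum_congr rfl (fun i _ => key i), Finset.sum_add_distrib,
      Finset.sum_ite_eq' Finset.univ i0 (fun _ => (1:ℝ)),
      Finset.sum_ite_eq' Finset.univ i1 (fun _ => |t| ^ q)]
    simp
  have hphi : ∀ t : ℝ, ∑ j, |a j + t * b j| ^ p = ((1 + |t| ^ q) ^ (1/q)) ^ p := by
    intro t
    have h1 := hT (e0 + t • e1)
    simp only [map_add, map_smul, Pi.add_apply, Pi.smul_apply, smul_eq_mul, ← ha, ← hb] at h1
    rw [hsum t] at h1
    have hnn : (0:ℝ) ≤ ∑ j, |a j + t * b j| ^ p :=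
      Finset.sum_nonneg fun j _ => Real.rpow_nonneg (abs_nonneg _) _
    calc ∑ j, |a j + t * b j| ^ p
        = ((∑ j, |a j + t * b j| ^ p) ^ (1/p)) ^ p := by
          rw [one_div, Real.rpow_inv_rpow hnn hpne]
      _ = ((1 + |t| ^ q) ^ (1/q)) ^ p := by rw [h1]
  have ha1 : ∑ j, |a j| ^ p = 1 := by
    have := hphi 0
    simpa [Real.zero_rpow hqne, Real.one_rpow] using this
  have hb1 : ∑ j, |b j| ^ p = 1 := by
    have h1 := hT e1
    have hrhs : ∑ i, |e1 i| ^ q = 1 := by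
      have key : ∀ i : Fin m, |e1 i| ^ q = if i = i1 then 1 else 0 := by
        intro i
        by_cases h : i = i1
        · subst h; simp [he1]
        · rw [he1, Pi.single_eq_of_ne h]; simp [h, Real.zero_rpow hqne]
      rw [Finset.sum_congr rfl (fun i _ => key i),
        Finset.sum_ite_eq' Finset.univ i1 (fun _ => (1:ℝ))]
      simp
    rw [hrhs, Real.one_rpow, ← hb] at h1
    have hnn : (0:ℝ) ≤ ∑ j, |b j| ^ p :=
      Finset.sum_nonneg fun j _ => Real.rpow_nonneg (abs_nonneg _) _
    calc ∑ j, |b j| ^ p = ((∑ j, |b j| ^ p) ^ (1/p)) ^ p := by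
          rw [one_div, Real.rpow_inv_rpow hnn hpne]
      _ = 1 := by rw [h1, Real.one_rpow]
  -- Key step: a and b have disjoint supports
  have hkey : ∀ j, a j = 0 ∨ b j = 0 := by
    intro j
    by_contra hcon
    push_neg at hcon
    obtain ⟨haj, hbj⟩ := hcon
    set t₀ : ℝ := -(a j) / b j with ht₀def
    have ht₀ : t₀ ≠ 0 := by
      rw [ht₀def]
      intro h
      rcases div_eq_zero_iff.mp h with h' | h'
      · exact haj (neg_eq_zero.mp h')
      · exact hbj h'
    have hroot : a j + t₀ * b j = 0 := by
      rw [ht₀def, div_mul_cancel₀ _ hbj]; ring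
    have hψ : DifferentiableAt ℝ (fun t : ℝ => ((1 + |t| ^ q) ^ (1/q)) ^ p) t₀ := by
      have h1 : DifferentiableAt ℝ (fun t : ℝ => |t|) t₀ := differentiableAt_abs ht₀
      have h2 : DifferentiableAt ℝ (fun t : ℝ => |t| ^ q) t₀ :=
        h1.rpow_const (Or.inl (by simpa using ht₀))
      have h3 : DifferentiableAt ℝ (fun t : ℝ => 1 + |t| ^ q) t₀ :=
        (differentiableAt_const 1).add h2
      have h4 : DifferentiableAt ℝ (fun t : ℝ => (1 + |t| ^ q) ^ (1/q)) t₀ :=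
        h3.rpow_const (Or.inl (by positivity))
      exact h4.rpow_const (Or.inl (by positivity))
    have hφ : DifferentiableAt ℝ (fun t : ℝ => ∑ k, |a k + t * b k| ^ p) t₀ := by
      have heq : (fun t : ℝ => ∑ k, |a k + t * b k| ^ p)
          = fun t => ((1 + |t| ^ q) ^ (1/q)) ^ p := funext hphi
      rw [heq]; exact hψ
    set S : Finset (Fin n) := Finset.univ.filter (fun k => a k + t₀ * b k = 0) with hS
    have hrest : DifferentiableAt ℝ (fun t : ℝ => ∑ k ∈ Sᶜ, |a k + t * b k| ^ p) t₀ := by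
      apply DifferentiableAt.fun_sum
      intro k hk
      have hk0 : a k + t₀ * b k ≠ 0 := by
        simpa [hS, Finset.mem_compl, Finset.mem_filter] using hk
      have hlin : DifferentiableAt ℝ (fun t : ℝ => a k + t * b k) t₀ := by fun_prop
      exact (hlin.abs hk0).rpow_const (Or.inl (by simpa using hk0))
    have hsplit : (fun t : ℝ => ∑ k, |a k + t * b k| ^ p)
        = fun t => (∑ k ∈ S, |a k + t * b k| ^ p) + ∑ k ∈ Sᶜ, |a k + t * b k| ^ p := by
      funext t
      rw [Finset.sum_add_sum_compl]
    rw [hsplit] at hφ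
    have hg : DifferentiableAt ℝ (fun t : ℝ => ∑ k ∈ S, |a k + t * b k| ^ p) t₀ := by
      have := hφ.fun_sub hrest
      simpa using this
    set C : ℝ := ∑ k ∈ S, |b k| ^ p with hCdef
    have hjS : j ∈ S := by simp [hS, hroot]
    have hC : 0 < C := by
      apply Finset.sum_pos' (fun k _ => by positivity)
      exact ⟨j, hjS, by positivity⟩
    have hgeq : (fun t : ℝ => ∑ k ∈ S, |a k + t * b k| ^ p)
        = fun t => C * |t - t₀| ^ p := by
      funext t
      have step : ∀ k ∈ S, |a k + t * b k| ^ p = |t - t₀| ^ p * |b k| ^ p := by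
        intro k hk
        have hk0 : a k + t₀ * b k = 0 := by
          simpa [hS, Finset.mem_filter] using hk
        have hak : a k + t * b k = (t - t₀) * b k := by
          have : a k = -(t₀ * b k) := by linarith
          rw [this]; ring
        rw [hak, abs_mul, Real.mul_rpow (abs_nonneg _) (abs_nonneg _)]
      rw [Finset.sum_congr rfl step, ← Finset.mul_sum, ← hCdef, mul_comm]
    rw [hgeq] at hg
    exact aux_not_diff_spike C t₀ p hC hp0 hp1 hg
  -- Conclude p = q
  have hfin : (2:ℝ) = ((1 + |(1:ℝ)| ^ q) ^ (1/q)) ^ p := by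
    have h2 := hphi 1
    have hterm : ∀ k : Fin n, |a k + 1 * b k| ^ p = |a k| ^ p + |b k| ^ p := by
      intro k
      rcases hkey k with h | h
      · rw [h]; simp [Real.zero_rpow hpne]
      · rw [h]; simp [Real.zero_rpow hpne]
    rw [Finset.sum_congr rfl (fun k _ => hterm k), Finset.sum_add_distrib, ha1, hb1] at h2
    norm_num at h2 ⊢
    exact h2
  norm_num at hfin
  have hfin2 : (2:ℝ) ^ ((1:ℝ)) = (2:ℝ) ^ (q⁻¹ * p) := by
    rw [Real.rpow_one, Real.rpow_mul (by norm_num : (0:ℝ) ≤ 2)]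
    exact hfin
  have hexp : (1:ℝ) = q⁻¹ * p := by
    by_contra hne
    rcases lt_or_gt_of_ne hne with h | h
    · have := (Real.rpow_lt_rpow_left_iff (by norm_num : (1:ℝ) < 2)).mpr h
      rw [← hfin2] at this
      simp at this
    · have := (Real.rpow_lt_rpow_left_iff (by norm_num : (1:ℝ) < 2)).mpr h
      rw [← hfin2] at this
      simp at this
  have : p = q := by
    field_simp at hexp
    linarith
  exact hqp this.symm
end

section
/- Let H be a complex separable Hilbert space with dim H ≥ 2. Then there is no linear map J from ℂ² into the space of compact operators on H such that the operator norm of J(a) equals |a₁| + |a₂| for all a = (a₁, a₂) ∈ ℂ²; that is, ℓ_1²(ℂ) does not embed isometrically into S_∞(H). -/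
open Metric Filter Topology Submodule ContinuousLinearMap
open scoped InnerProductSpace ComplexConjugate



-- distinct unimodular complex numbers
lemma aux_unimodular : ∃ μ : ℕ → ℂ, Function.Injective μ ∧ ∀ n, ‖μ n‖ = 1 := by
  refine ⟨fun n => Complex.exp ((1 / (n + 1) : ℝ) * Complex.I), ?_, ?_⟩
  · intro n m h
    rw [Complex.exp_eq_exp_iff_exists_int] at h
    obtain ⟨k, hk⟩ := h
    have him := congrArg Complex.im hk
    have e1 : ∀ r : ℝ, ((r : ℂ) * Complex.I).im = r := by
      intro r; rw [Complex.mul_I_im, Complex.ofReal_re]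
    rw [Complex.add_im, e1, e1] at him
    have e2 : ((k : ℂ) * (2 * (Real.pi : ℂ) * Complex.I)).im = (k : ℝ) * (2 * Real.pi) := by
      have : ((k : ℂ) * (2 * (Real.pi : ℂ) * Complex.I)) = ((((k : ℝ) * (2 * Real.pi)) : ℝ) : ℂ) * Complex.I := by
        push_cast; ring
      rw [this, e1]
    rw [e2] at him
    have hπ := Real.pi_gt_three
    have h1 : (1 : ℝ) / (n + 1) ≤ 1 := by
      rw [div_le_one (by positivity)]; linarith [Nat.cast_nonneg (α := ℝ) n]
    have h2 : (1 : ℝ) / (m + 1) ≤ 1 := by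
      rw [div_le_one (by positivity)]; linarith [Nat.cast_nonneg (α := ℝ) m]
    have h1' : (0 : ℝ) < 1 / (n + 1) := by positivity
    have h2' : (0 : ℝ) < 1 / (m + 1) := by positivity
    have hk0 : k = 0 := by
      rcases lt_trichotomy k 0 with h | h | h
      · have : (k : ℝ) ≤ -1 := by exact_mod_cast Int.le_of_lt_add_one (by simpa using h)
        nlinarith
      · exact h
      · have : (1 : ℝ) ≤ (k : ℝ) := by exact_mod_cast h
        nlinarith
    rw [hk0] at him
    simp only [Int.cast_zero, zero_mul, add_zero] at him
    field_simp at him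
    exact_mod_cast (add_right_cancel him).symm
  · intro n
    exact Complex.norm_exp_ofReal_mul_I _



lemma aux_exact_eig {H : Type*} [NormedAddCommGroup H] [InnerProductSpace ℂ H]
    (C : H →L[ℂ] H) (hCc : IsCompactOperator C) (μ : ℂ) (hμ : μ ≠ 0)
    (happ : ∀ ε : ℝ, 0 < ε → ∃ x : H, ‖x‖ ≤ 1 ∧ 1 - ε ≤ ‖x‖ ∧ ‖C x - μ • x‖ ≤ ε) :
    ∃ x : H, ‖x‖ = 1 ∧ C x = μ • x := by
  choose xs h1 h2 h3 using fun k : ℕ => happ (1 / (k + 1)) (by positivity)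
  obtain ⟨K, hK, hKsub⟩ := hCc.image_closedBall_subset_compact 1
  have hmem : ∀ k, C (xs k) ∈ K := fun k =>
    hKsub ⟨xs k, mem_closedBall_zero_iff.2 (h1 k), rfl⟩
  obtain ⟨y, -, φ, hφ, hconv⟩ := hK.tendsto_subseq hmem
  have hg : Tendsto (fun k : ℕ => (1 : ℝ) / (k + 1)) atTop (𝓝 0) :=
    tendsto_one_div_add_atTop_nhds_zero_nat
  have herr : Tendsto (fun k => C (xs (φ k)) - μ • xs (φ k)) atTop (𝓝 0) := by
    refine squeeze_zero_norm (fun k => le_trans (h3 (φ k)) ?_) hg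
    apply one_div_le_one_div_of_le (by positivity)
    have h' : (k:ℝ) ≤ (φ k : ℝ) := Nat.cast_le.2 hφ.le_apply; linarith
  have hμs : Tendsto (fun k => μ • xs (φ k)) atTop (𝓝 y) := by
    have := hconv.sub herr
    simpa using this
  have hxs : Tendsto (fun k => xs (φ k)) atTop (𝓝 (μ⁻¹ • y)) := by
    have := hμs.const_smul μ⁻¹
    simpa [smul_smul, inv_mul_cancel₀ hμ] using this
  refine ⟨μ⁻¹ • y, ?_, ?_⟩
  · have hn : Tendsto (fun k => ‖xs (φ k)‖) atTop (𝓝 ‖μ⁻¹ • y‖) := hxs.norm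
    have hn1 : Tendsto (fun k => ‖xs (φ k)‖) atTop (𝓝 1) := by
      refine tendsto_of_tendsto_of_tendsto_of_le_of_le
        (g := fun k : ℕ => 1 - 1/(k+1 : ℝ)) (h := fun _ : ℕ => (1:ℝ))
        (by simpa using (tendsto_const_nhds (x := (1:ℝ))).sub hg) tendsto_const_nhds ?_ ?_
      · intro k
        refine le_trans ?_ (h2 (φ k))
        have : (1:ℝ) / (φ k + 1) ≤ 1 / (k + 1) := by
          apply one_div_le_one_div_of_le (by positivity)
          have h' : (k:ℝ) ≤ (φ k : ℝ) := Nat.cast_le.2 hφ.le_apply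
          linarith
        linarith
      · exact fun k => h1 (φ k)
    exact tendsto_nhds_unique hn hn1
  · have hC : Tendsto (fun k => C (xs (φ k))) atTop (𝓝 (C (μ⁻¹ • y))) :=
      (C.continuous.tendsto _).comp hxs
    have : C (μ⁻¹ • y) = y := tendsto_nhds_unique hC hconv
    rw [this, smul_smul, mul_inv_cancel₀ hμ, one_smul]



lemma aux_no_eig {H : Type*} [NormedAddCommGroup H] [InnerProductSpace ℂ H]
    (C : H →L[ℂ] H) (hCc : IsCompactOperator C) (μ : ℕ → ℂ) (hinj : Function.Injective μ)
    (hμ : ∀ n, ‖μ n‖ = 1) (e : ℕ → H) (he1 : ∀ n, ‖e n‖ = 1)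
    (he : ∀ n, C (e n) = μ n • e n) : False := by
  -- eigenvectors are linearly independent
  have hLI : LinearIndependent ℂ e := by
    apply Module.End.eigenvectors_linearIndependent' (C : H →ₗ[ℂ] H) μ hinj
    intro i
    constructor
    · rw [Module.End.mem_eigenspace_iff]; exact he i
    · intro h0; have := he1 i; rw [h0, norm_zero] at this; norm_num at this
  -- the spans
  set M : ℕ → Submodule ℂ H := fun n => span ℂ (e '' Set.Iio n) with hM
  have hMfin : ∀ n, FiniteDimensional ℂ (M n) := fun n =>
    FiniteDimensional.span_of_finite ℂ ((Set.finite_Iio n).image e)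
  have hMmono : Monotone M := fun a b hab =>
    span_mono (Set.image_mono fun x hx => lt_of_lt_of_le hx hab)
  have heM : ∀ n, e n ∈ M (n + 1) :=
    fun n => subset_span ⟨n, Nat.lt_succ_self n, rfl⟩
  have heNM : ∀ n, e n ∉ M n := fun n =>
    hLI.notMem_span_image (by simp)
  -- C maps M n to itself
  have hCM : ∀ n, ∀ v ∈ M n, C v ∈ M n := by
    intro n v hv
    induction hv using span_induction with
    | mem x hx =>
      obtain ⟨i, hi, rfl⟩ := hx
      rw [he i]
      exact smul_mem _ _ (subset_span ⟨i, hi, rfl⟩)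
    | zero => simp
    | add x y _ _ hx hy => rw [map_add]; exact add_mem hx hy
    | smul c x _ hx => rw [map_smul]; exact smul_mem _ _ hx
  -- construct the orthogonal sequence
  haveI : ∀ n, CompleteSpace (M n) := fun n => by
    haveI := hMfin n; exact FiniteDimensional.complete ℂ (M n)
  set z : ℕ → H := fun n => e n - (orthogonalProjection (M n) (e n) : H) with hz
  have hzO : ∀ n, z n ∈ (M n)ᗮ := fun n => sub_starProjection_mem_orthogonal (K := M n) _
  have hz0 : ∀ n, z n ≠ 0 := by
    intro n h0
    apply heNM n
    have : e n = (orthogonalProjection (M n) (e n) : H) := by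
      rwa [hz, sub_eq_zero] at h0
    rw [this]; exact SetLike.coe_mem _
  set y : ℕ → H := fun n => ((‖z n‖ : ℂ))⁻¹ • z n with hy
  have hy1 : ∀ n, ‖y n‖ = 1 := by
    intro n
    rw [hy]
    rw [norm_smul, norm_inv, Complex.norm_real, Real.norm_eq_abs,
      abs_of_nonneg (norm_nonneg _), inv_mul_cancel₀ (norm_ne_zero_iff.2 (hz0 n))]
  have hyO : ∀ n, y n ∈ (M n)ᗮ := fun n => smul_mem _ _ (hzO n)
  have hyM : ∀ n, y n ∈ M (n + 1) := by
    intro n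
    apply smul_mem
    exact sub_mem (heM n) (hMmono (Nat.le_succ n) (SetLike.coe_mem _))
  -- C y n - μ n • y n ∈ M n
  have hvM : ∀ n, C (y n) - μ n • y n ∈ M n := by
    intro n
    have hp : (orthogonalProjection (M n) (e n) : H) ∈ M n := SetLike.coe_mem _
    have key : C (z n) - μ n • z n =
        μ n • (orthogonalProjection (M n) (e n) : H) -
          C (orthogonalProjection (M n) (e n) : H) := by
      rw [hz]; simp only [map_sub, smul_sub, he n]; abel
    have : C (y n) - μ n • y n = ((‖z n‖ : ℂ))⁻¹ • (C (z n) - μ n • z n) := by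
      rw [hy]; simp only [map_smul, smul_sub, smul_comm ((‖z n‖ : ℂ))⁻¹ (μ n)]
    rw [this, key]
    exact smul_mem _ _ (sub_mem (smul_mem _ _ hp) (hCM n _ hp))
  -- separation
  have hsep : ∀ m n, m < n → 1 ≤ ‖C (y n) - C (y m)‖ := by
    intro m n hmn
    have hw : (C (y n) - μ n • y n) - C (y m) ∈ M n :=
      sub_mem (hvM n) (hCM n _ (hMmono hmn (hyM m)))
    have hsplit : C (y n) - C (y m) = μ n • y n + ((C (y n) - μ n • y n) - C (y m)) := by
      abel
    have horth : ⟪μ n • y n, (C (y n) - μ n • y n) - C (y m)⟫_ℂ = 0 :=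
      (Submodule.mem_orthogonal' (M n) _).1 (smul_mem _ _ (hyO n)) _ hw
    have hnorm : ‖μ n • y n‖ = 1 := by
      rw [norm_smul, hy1 n, mul_one, hμ n]
    have := norm_add_sq (𝕜 := ℂ) (μ n • y n) ((C (y n) - μ n • y n) - C (y m))
    rw [horth] at this
    simp only [map_zero, mul_zero, add_zero] at this
    rw [hsplit]
    nlinarith [norm_nonneg ((C (y n) - μ n • y n) - C (y m)),
      norm_nonneg (μ n • y n + ((C (y n) - μ n • y n) - C (y m))),
      sq_nonneg (‖(C (y n) - μ n • y n) - C (y m)‖), hnorm]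
  -- contradiction with compactness
  obtain ⟨K, hK, hKsub⟩ := hCc.image_closedBall_subset_compact 1
  have hmem : ∀ k, C (y k) ∈ K := fun k =>
    hKsub ⟨y k, mem_closedBall_zero_iff.2 (hy1 k).le, rfl⟩
  obtain ⟨L, -, φ, hφ, hconv⟩ := hK.tendsto_subseq hmem
  have h2 : Tendsto (fun k => C (y (φ (k + 1)))) atTop (𝓝 L) :=
    hconv.comp (tendsto_add_atTop_nat 1)
  have hdiff : Tendsto (fun k => ‖C (y (φ (k + 1))) - C (y (φ k))‖) atTop (𝓝 0) := by
    have := (h2.sub hconv).norm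
    simpa using this
  have hge : ∀ k, (1 : ℝ) ≤ ‖C (y (φ (k + 1))) - C (y (φ k))‖ := fun k =>
    hsep (φ k) (φ (k + 1)) (hφ (Nat.lt_succ_self k))
  have : (1 : ℝ) ≤ 0 := ge_of_tendsto' hdiff hge
  linarith

/-- Let `H` be a complex separable Hilbert space with `dim H ≥ 2`.  Then `ℓ_1²(ℂ)` does
not embed isometrically into `S_∞(H)`: there is no linear map `J` from `ℂ²` to the
compact operators on `H` with `‖J a‖ = |a₁| + |a₂|` for all `a ∈ ℂ²`. -/
theorem no_isometric_embedding_l12_into_compacts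
    {H : Type*} [NormedAddCommGroup H] [InnerProductSpace ℂ H] [CompleteSpace H]
    [TopologicalSpace.SeparableSpace H] (hdim : 2 ≤ Module.rank ℂ H) :
    ¬ ∃ J : (Fin 2 → ℂ) →ₗ[ℂ] (H →L[ℂ] H),
      (∀ a, IsCompactOperator (J a)) ∧
      (∀ a : Fin 2 → ℂ, ‖J a‖ = ‖a 0‖ + ‖a 1‖) := by
  rintro ⟨J, hJc, hJn⟩
  set A := J (Pi.single 0 1) with hA
  set B := J (Pi.single 1 1) with hB
  have hnA : ‖A‖ = 1 := by
    rw [hA, hJn]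
    simp [Pi.single_apply]
  have hnB : ‖B‖ = 1 := by
    rw [hB, hJn]
    simp [Pi.single_apply]
  have hsum : ∀ lam : ℂ, ‖lam‖ = 1 → ‖A + lam • B‖ = 2 := by
    intro lam hlam
    have heq : A + lam • B
        = J ((Pi.single 0 1 : Fin 2 → ℂ) + lam • (Pi.single 1 1 : Fin 2 → ℂ)) := by
      rw [map_add, map_smul]
    rw [heq, hJn]
    simp [Pi.single_apply, hlam]
    norm_num
  set C : H →L[ℂ] H := (ContinuousLinearMap.adjoint A).comp B with hC
  have hCc : IsCompactOperator C := by
    have := (hJc (Pi.single 1 1)).continuous_comp (ContinuousLinearMap.adjoint A).continuous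
    show IsCompactOperator ⇑((ContinuousLinearMap.adjoint A).comp B)
    rw [ContinuousLinearMap.coe_comp']
    exact this
  have hCb : ∀ x : H, ‖C x‖ ≤ ‖x‖ := by
    intro x
    calc ‖C x‖ = ‖ContinuousLinearMap.adjoint A (B x)‖ := rfl
      _ ≤ ‖ContinuousLinearMap.adjoint A‖ * ‖B x‖ := le_opNorm _ _
      _ = ‖A‖ * ‖B x‖ := by
          rw [LinearIsometryEquiv.norm_map (ContinuousLinearMap.adjoint (𝕜 := ℂ)) A]
      _ ≤ 1 * (‖B‖ * ‖x‖) := by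
          rw [hnA]; exact mul_le_mul_of_nonneg_left (le_opNorm _ _) zero_le_one
      _ = ‖x‖ := by rw [hnB]; ring
  have hinner : ∀ x : H, ⟪x, C x⟫_ℂ = ⟪A x, B x⟫_ℂ := fun x =>
    ContinuousLinearMap.adjoint_inner_right A x (B x)
  -- approximate eigenvectors
  have happ : ∀ (ν : ℂ), ‖ν‖ = 1 → ∀ ε : ℝ, 0 < ε →
      ∃ x : H, ‖x‖ ≤ 1 ∧ 1 - ε ≤ ‖x‖ ∧ ‖C x - ν • x‖ ≤ ε := by
    intro ν hν ε hε
    set δ : ℝ := min (ε ^ 2 / 4) (min (ε / 2) (1 / 2)) with hδ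
    have hδ0 : 0 < δ := lt_min (by positivity) (lt_min (by positivity) (by norm_num))
    have hδhalf : δ ≤ 1 / 2 := by
      rw [hδ]; exact le_trans (min_le_right _ _) (min_le_right _ _)
    have hδeps : δ ≤ ε / 2 := by
      rw [hδ]; exact le_trans (min_le_right _ _) (min_le_left _ _)
    set lam : ℂ := conj ν with hlam
    have hlam1 : ‖lam‖ = 1 := by rw [hlam, Complex.norm_conj]; exact hν
    have h2 : (2 : ℝ) - δ < ‖A + lam • B‖ := by rw [hsum lam hlam1]; linarith
    obtain ⟨x, hx1, hx2⟩ := exists_lt_apply_of_lt_opNorm (A + lam • B) h2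
    have hx1' : ‖x‖ ≤ 1 := hx1.le
    have hAx : ‖A x‖ ≤ 1 := by
      calc ‖A x‖ ≤ ‖A‖ * ‖x‖ := le_opNorm _ _
        _ ≤ 1 := by rw [hnA]; linarith
    have hBx : ‖B x‖ ≤ 1 := by
      calc ‖B x‖ ≤ ‖B‖ * ‖x‖ := le_opNorm _ _
        _ ≤ 1 := by rw [hnB]; linarith
    have hδ2 : δ < 2 := by linarith
    -- expand the norm
    have hexp := norm_add_sq (𝕜 := ℂ) (A x) (lam • B x)
    have heval : (A + lam • B) x = A x + lam • B x := by
      rw [ContinuousLinearMap.add_apply, ContinuousLinearMap.smul_apply]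
    rw [heval] at hx2
    have hls : ‖lam • B x‖ ≤ 1 := by
      rw [norm_smul, hlam1, one_mul]; exact hBx
    have hkey : 1 - 2 * δ ≤ (lam * ⟪A x, B x⟫_ℂ).re := by
      have h1 : (2 - δ) ^ 2 < ‖A x + lam • B x‖ ^ 2 := by
        have h0 : (0:ℝ) ≤ 2 - δ := by linarith
        exact pow_lt_pow_left₀ hx2 h0 (by norm_num)
      rw [hexp] at h1
      have : RCLike.re ⟪A x, lam • B x⟫_ℂ = (lam * ⟪A x, B x⟫_ℂ).re := by
        rw [inner_smul_right]
        rfl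
      rw [this] at h1
      nlinarith [hAx, hls, norm_nonneg (A x), norm_nonneg (lam • B x)]
    have hre : 1 - 2 * δ ≤ (lam * ⟪x, C x⟫_ℂ).re := by rwa [hinner x]
    refine ⟨x, hx1', ?_, ?_⟩
    · have habs : (lam * ⟪x, C x⟫_ℂ).re ≤ ‖x‖ := by
        calc (lam * ⟪x, C x⟫_ℂ).re ≤ ‖lam * ⟪x, C x⟫_ℂ‖ := Complex.re_le_norm _
          _ = ‖⟪x, C x⟫_ℂ‖ := by rw [norm_mul, hlam1, one_mul]
          _ ≤ ‖x‖ * ‖C x‖ := by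
              exact norm_inner_le_norm _ _
          _ ≤ ‖x‖ * ‖x‖ := mul_le_mul_of_nonneg_left (hCb x) (norm_nonneg _)
          _ ≤ ‖x‖ * 1 := mul_le_mul_of_nonneg_left hx1' (norm_nonneg _)
          _ = ‖x‖ := mul_one _
      have : δ ≤ ε / 2 := hδeps
      linarith
    · have hsq := norm_sub_sq (𝕜 := ℂ) (C x) (ν • x)
      have hin : RCLike.re ⟪C x, ν • x⟫_ℂ = (lam * ⟪x, C x⟫_ℂ).re := by
        rw [inner_smul_right]
        have : ⟪C x, x⟫_ℂ = conj ⟪x, C x⟫_ℂ := (inner_conj_symm _ _).symm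
        rw [this]
        have : ν * conj ⟪x, C x⟫_ℂ = conj (lam * ⟪x, C x⟫_ℂ) := by
          rw [map_mul, hlam, Complex.conj_conj]
        rw [this]
        exact (Complex.conj_re _)
      have hνx : ‖ν • x‖ ≤ 1 := by
        rw [norm_smul, hν, one_mul]; exact hx1'
      have hCx : ‖C x‖ ≤ 1 := le_trans (hCb x) hx1'
      have e1 : ‖C x‖ ^ 2 ≤ 1 := pow_le_one₀ (norm_nonneg _) hCx
      have e2 : ‖ν • x‖ ^ 2 ≤ 1 := pow_le_one₀ (norm_nonneg _) hνx
      have hsqle : ‖C x - ν • x‖ ^ 2 ≤ ε ^ 2 := by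
        have hδe : 4 * δ ≤ ε ^ 2 := by
          have := min_le_left (ε ^ 2 / 4) (min (ε / 2) (1 / 2))
          linarith
        rw [hsq, hin]
        linarith
      exact (pow_le_pow_iff_left₀ (norm_nonneg _) hε.le two_ne_zero).1 hsqle
  -- combine everything
  obtain ⟨μ, hμinj, hμ1⟩ := aux_unimodular
  have hex : ∀ n : ℕ, ∃ x : H, ‖x‖ = 1 ∧ C x = μ n • x := by
    intro n
    have hne : μ n ≠ 0 := by
      intro h0
      have := hμ1 n
      rw [h0] at this
      simp at this
    exact aux_exact_eig C hCc (μ n) hne (happ (μ n) (hμ1 n))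
  choose e he1 he using hex
  exact aux_no_eig C hCc μ hμinj hμ1 e he1 he
end

section
/- Let n ≥ 1 be an integer and let p, q ∈ (0,∞). Suppose there exists a linear map T : ℂ² → M_n(ℂ) such that (Tr((T(a)*T(a))^{p/2}))^{1/p} = (|a₁|^q + |a₂|^q)^{1/q} for all a = (a₁, a₂) ∈ ℂ². Then there exist Hermitian matrices A, B ∈ M_{2n}(ℂ) such that Tr(((A+tB)²)^{p/2}) = (1 + |t|^q)^{p/q} for all t ∈ ℝ. -/
open scoped Matrix

open Polynomial Matrix

section aux
variable {m : Type*} [Fintype m] [DecidableEq m]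

theorem det_smul_one_sub_mul_comm {R : Type*} [CommRing R] {x : R} (hx : IsUnit x)
    (A B : Matrix m m R) :
    Matrix.det (x • (1 : Matrix m m R) - A * B) = Matrix.det (x • 1 - B * A) := by
  obtain ⟨u, rfl⟩ := hx
  set x : R := (u : R)
  set v : R := ((u⁻¹ : Rˣ) : R)
  have hvx : v * x = 1 := by simp [v, x]
  have hxv : x * v = 1 := by simp [v, x]
  letI : Invertible (x • (1 : Matrix m m R)) :=
    ⟨v • 1, by rw [smul_mul_smul_comm, hvx, one_mul, one_smul],
      by rw [smul_mul_smul_comm, hxv, one_mul, one_smul]⟩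
  letI : Invertible (1 : Matrix m m R) := invertibleOne
  have h1 : (fromBlocks (x • 1) A B (1 : Matrix m m R)).det = det (x • 1 - A * B) := by
    rw [det_fromBlocks₂₂, invOf_one, Matrix.mul_one, det_one, one_mul]
  have h2 : (fromBlocks (x • 1) A B (1 : Matrix m m R)).det
      = det (x • (1 : Matrix m m R)) * det (1 - v • (B * A)) := by
    rw [det_fromBlocks₁₁]
    congr 1
    have hinv : ⅟(x • (1 : Matrix m m R)) = v • 1 := rfl
    rw [hinv]
    congr 1
    rw [Matrix.mul_smul, Matrix.mul_one, Matrix.smul_mul]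
  have h3 : det (x • (1 : Matrix m m R)) * det (1 - v • (B * A)) = det (x • 1 - B * A) := by
    have hs : x • ((1 : Matrix m m R) - v • (B * A)) = x • 1 - B * A := by
      rw [smul_sub, smul_smul, hxv, one_smul]
    rw [← hs, det_smul, det_smul, det_one, mul_one]
  rw [← h1, h2, h3]

theorem my_charpoly_map_det {R S : Type*} [CommRing R] [CommRing S] (f : R[X] →+* S)
    (M : Matrix m m R) :
    f M.charpoly = Matrix.det (f X • (1 : Matrix m m S) - M.map (f.comp C)) := by
  rw [Matrix.charpoly, RingHom.map_det]
  congr 1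
  ext i j
  by_cases h : i = j
  · subst h
    simp [charmatrix_apply, Matrix.diagonal_apply, Matrix.one_apply, Matrix.sub_apply,
      Matrix.smul_apply]
  · simp [charmatrix_apply, Matrix.diagonal_apply, Matrix.one_apply, h, Matrix.sub_apply,
      Matrix.smul_apply]

theorem my_charpoly_mul_comm (A B : Matrix m m ℂ) :
    (A * B).charpoly = (B * A).charpoly := by
  classical
  set K := FractionRing ℂ[X]
  have hinj : Function.Injective (algebraMap ℂ[X] K) := IsFractionRing.injective _ _
  apply hinj
  rw [my_charpoly_map_det (algebraMap ℂ[X] K), my_charpoly_map_det (algebraMap ℂ[X] K),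
    Matrix.map_mul, Matrix.map_mul]
  have hx : IsUnit ((algebraMap ℂ[X] K) X) := by
    rw [isUnit_iff_ne_zero]
    intro h
    exact X_ne_zero (hinj (by simpa using h))
  exact det_smul_one_sub_mul_comm hx _ _

theorem my_charpoly_diagonal (d : m → ℂ) :
    (Matrix.diagonal d).charpoly = ∏ i, (X - C (d i)) := by
  rw [Matrix.charpoly]
  have : charmatrix (Matrix.diagonal d) = Matrix.diagonal (fun i => X - C (d i)) := by
    ext i j
    by_cases h : i = j
    · subst h; simp [charmatrix_apply, Matrix.diagonal_apply]
    · simp [charmatrix_apply, Matrix.diagonal_apply, h]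
  rw [this, Matrix.det_diagonal]

theorem my_charpoly_hermitian {H : Matrix m m ℂ} (hH : H.IsHermitian) :
    H.charpoly = ∏ i, (X - C (hH.eigenvalues i : ℂ)) := by
  conv_lhs => rw [hH.spectral_theorem, Unitary.conjStarAlgAut_apply]
  rw [mul_assoc, my_charpoly_mul_comm, mul_assoc,
    Unitary.star_mul_self_of_mem (SetLike.coe_mem _), Matrix.mul_one,
    my_charpoly_diagonal]
  rfl

theorem my_roots_charpoly_hermitian {H : Matrix m m ℂ} (hH : H.IsHermitian) :
    H.charpoly.roots = Finset.univ.val.map (fun i => (hH.eigenvalues i : ℂ)) := by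
  rw [my_charpoly_hermitian hH, Finset.prod_eq_multiset_prod]
  have h := roots_multiset_prod_X_sub_C
    (Finset.univ.val.map (fun i => (hH.eigenvalues i : ℂ)))
  rw [Multiset.map_map] at h
  simpa [Function.comp] using h

theorem my_eigSum_eq (g : ℝ → ℝ) {H : Matrix m m ℂ} (hH : H.IsHermitian) :
    ∑ i, g (hH.eigenvalues i) = (H.charpoly.roots.map (fun z => g z.re)).sum := by
  rw [my_roots_charpoly_hermitian hH, Multiset.map_map, Finset.sum_eq_multiset_sum]
  congr 1

end aux

section schatten
variable (p : ℝ) {k : ℕ}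

theorem schattenSum_eq_rsum (A : Matrix (Fin k) (Fin k) ℂ) :
    schattenSum p A = ((Aᴴ * A).charpoly.roots.map (fun z => z.re ^ (p / 2))).sum :=
  my_eigSum_eq (fun x => x ^ (p / 2)) _

theorem schatten_dilation (N : Matrix (Fin k) (Fin k) ℂ) {K : ℕ} (e : Fin k ⊕ Fin k ≃ Fin K) :
    schattenSum p (Matrix.reindex e e (Matrix.fromBlocks 0 N Nᴴ 0)) = 2 * schattenSum p N := by
  set D : Matrix (Fin k ⊕ Fin k) (Fin k ⊕ Fin k) ℂ := Matrix.fromBlocks 0 N Nᴴ 0 with hD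
  set W := Matrix.reindex e e D with hW
  have hWc : Wᴴ * W = Matrix.reindex e e (Dᴴ * D) := by
    rw [hW, Matrix.reindex_apply, Matrix.reindex_apply, Matrix.conjTranspose_submatrix,
      Matrix.submatrix_mul_equiv]
  have hDD : Dᴴ * D = Matrix.fromBlocks (N * Nᴴ) 0 0 (Nᴴ * N) := by
    rw [hD, Matrix.fromBlocks_conjTranspose, Matrix.fromBlocks_multiply]
    simp
  have hcp : (Wᴴ * W).charpoly = (N * Nᴴ).charpoly * (Nᴴ * N).charpoly := by
    rw [hWc, Matrix.charpoly_reindex, hDD, Matrix.charpoly_fromBlocks_zero₁₂]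
  rw [schattenSum_eq_rsum, hcp, Polynomial.roots_mul
      (((N * Nᴴ).charpoly_monic.mul (Nᴴ * N).charpoly_monic).ne_zero),
    Multiset.map_add, Multiset.sum_add, my_charpoly_mul_comm N Nᴴ,
    ← schattenSum_eq_rsum, two_mul]
end schatten



/-- Let `n ≥ 1` and `p, q ∈ (0,∞)`.  If there is a linear `T : ℂ² → M_n(ℂ)` with
`(Tr((T(a)*T(a))^{p/2}))^{1/p} = (|a₁|^q + |a₂|^q)^{1/q}` for all `a ∈ ℂ²`, then there
are Hermitian `A, B ∈ M_{2n}(ℂ)` with `Tr(((A+tB)²)^{p/2}) = (1+|t|^q)^{p/q}` for all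
real `t`. -/
theorem hermitian_pair_from_embedding (n : ℕ) (hn : 1 ≤ n) (p q : ℝ)
    (hp : 0 < p) (hq : 0 < q)
    (hT : ∃ T : (Fin 2 → ℂ) →ₗ[ℂ] Matrix (Fin n) (Fin n) ℂ,
      ∀ a : Fin 2 → ℂ,
        schattenSum p (T a) ^ (1 / p)
          = (‖a 0‖ ^ q + ‖a 1‖ ^ q) ^ (1 / q)) :
    ∃ A B : Matrix (Fin (2 * n)) (Fin (2 * n)) ℂ, A.IsHermitian ∧ B.IsHermitian ∧
      ∀ t : ℝ, schattenSum p (A + (t : ℂ) • B) = (1 + |t| ^ q) ^ (p / q) := by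

  obtain ⟨T, hT⟩ := hT
  have hnn : ∀ a, 0 ≤ schattenSum p (T a) := by
    intro a
    apply Finset.sum_nonneg
    intro i _
    exact Real.rpow_nonneg (Matrix.eigenvalues_conjTranspose_mul_self_nonneg _ i) _
  have hT' : ∀ a : Fin 2 → ℂ, schattenSum p (T a)
      = (‖a 0‖ ^ q + ‖a 1‖ ^ q) ^ (p / q) := by
    intro a
    have h0 : (0:ℝ) ≤ ‖a 0‖ ^ q + ‖a 1‖ ^ q :=
      add_nonneg (Real.rpow_nonneg (norm_nonneg _) _)
        (Real.rpow_nonneg (norm_nonneg _) _)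
    have h := congrArg (fun x : ℝ => x ^ p) (hT a)
    rw [← Real.rpow_mul (hnn a), ← Real.rpow_mul h0, one_div_mul_cancel hp.ne',
      Real.rpow_one] at h
    rw [h, one_div, inv_mul_eq_div]
  set c : ℝ := (1/2 : ℝ) ^ (1/p) with hc
  have hc0 : 0 < c := Real.rpow_pos_of_pos one_half_pos _
  have hcp : c ^ p = 1/2 := by
    rw [hc, ← Real.rpow_mul (le_of_lt one_half_pos), one_div_mul_cancel hp.ne', Real.rpow_one]
  set M0 := T ![(c:ℂ), 0] with hM0
  set M1 := T ![0, (c:ℂ)] with hM1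
  set e : Fin n ⊕ Fin n ≃ Fin (2*n) := finSumFinEquiv.trans (finCongr (two_mul n).symm) with he
  refine ⟨Matrix.reindex e e (Matrix.fromBlocks 0 M0 M0ᴴ 0),
    Matrix.reindex e e (Matrix.fromBlocks 0 M1 M1ᴴ 0), ?_, ?_, ?_⟩
  · show _ᴴ = _
    rw [Matrix.reindex_apply, Matrix.conjTranspose_submatrix, Matrix.fromBlocks_conjTranspose]
    simp
  · show _ᴴ = _
    rw [Matrix.reindex_apply, Matrix.conjTranspose_submatrix, Matrix.fromBlocks_conjTranspose]
    simp
  · intro t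
    set N : Matrix (Fin n) (Fin n) ℂ := M0 + (t:ℂ) • M1 with hNdef
    have hsum : Matrix.reindex e e (Matrix.fromBlocks 0 M0 M0ᴴ 0)
        + (t:ℂ) • Matrix.reindex e e (Matrix.fromBlocks 0 M1 M1ᴴ 0)
        = Matrix.reindex e e (Matrix.fromBlocks 0 N Nᴴ 0) := by
      rw [Matrix.reindex_apply, Matrix.reindex_apply, Matrix.reindex_apply]
      have hfb : Matrix.fromBlocks 0 M0 M0ᴴ 0 + (t:ℂ) • Matrix.fromBlocks 0 M1 M1ᴴ 0
          = Matrix.fromBlocks 0 N Nᴴ (0 : Matrix (Fin n) (Fin n) ℂ) := by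
        rw [Matrix.fromBlocks_smul, Matrix.fromBlocks_add, hNdef]
        congr 1 <;> simp [Matrix.conjTranspose_smul, Complex.star_def, Complex.conj_ofReal]
      rw [← hfb]
      rfl
    have hN : N = T ![(c:ℂ), (t:ℂ)*(c:ℂ)] := by
      rw [hNdef, hM0, hM1, ← _root_.map_smul, ← _root_.map_add]
      congr 1
      funext i
      fin_cases i <;> simp
    rw [hsum, schatten_dilation, hN, hT']
    have habs0 : ‖((c:ℝ):ℂ)‖ = c := by
      rw [Complex.norm_real, Real.norm_eq_abs, abs_of_pos hc0]
    have habs1 : ‖(t:ℂ)*(c:ℂ)‖ = |t| * c := by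
      rw [norm_mul, Complex.norm_real, Complex.norm_real, Real.norm_eq_abs, Real.norm_eq_abs, abs_of_pos hc0]
    simp only [Matrix.cons_val_zero, Matrix.cons_val_one, Matrix.head_cons, habs0, habs1]
    have h1 : (|t| * c) ^ q = |t| ^ q * c ^ q :=
      Real.mul_rpow (abs_nonneg t) (le_of_lt hc0)
    have hcq0 : (0:ℝ) ≤ c ^ q := Real.rpow_nonneg (le_of_lt hc0) _
    have hR0 : (0:ℝ) ≤ 1 + |t| ^ q :=
      add_nonneg zero_le_one (Real.rpow_nonneg (abs_nonneg t) _)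
    have h2 : c ^ q + (|t| * c) ^ q = c ^ q * (1 + |t| ^ q) := by
      rw [h1]; ring
    rw [h2, Real.mul_rpow hcq0 hR0, ← Real.rpow_mul (le_of_lt hc0),
      show q * (p / q) = p by field_simp, hcp]
    ring
end
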